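/- arXiv:1604.01695 — 2 statements merged into one kernel-verified Lean document; each statement's English description precedes it below -/
import Mathlib

section
/- Let m(t), K(t), A_i(t), B_i(t) (i = 1,…,n) be nonnegative functions such that each A_i ≥ e is absolutely continuous and K ∈ L¹_loc([0,∞)). Let 𝒯 > 0, and suppose that for a.e. t ∈ (0,𝒯): (d/dt)A₁(t) + B₁(t) ≤ K(t)(log Σ_{i=1}^n A_i(t)) A₁(t), and for each i = 2,…,n, (d/dt)A_i(t) + B_i(t) ≤ K(t)(log Σ_{j=1}^n A_j(t)) A_i(t) + ζ A_{i−1}^α(t) B_{i−1}(t), where α ≥ 1 and ζ ≥ 1 are constants. Then Σ_{i=1}^n A_i(t) + Σ_{i=1}^n ∫₀^t B_i(s) ds ≤ Q(t) for all t ∈ [0,𝒯), where Q is a continuous function on [0,∞) determined only by the values A_i(0), i = 1,…,n, and by the function K. -/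
noncomputable section
open MeasureTheory Real Set Filter

/-- Absolute continuity of a real function on the interval `[a, b]`. -/
def AbsContOn (f : ℝ → ℝ) (a b : ℝ) : Prop :=
  ∀ ε > (0 : ℝ), ∃ δ > (0 : ℝ), ∀ n : ℕ, ∀ c d : Fin n → ℝ,
    (∀ i, a ≤ c i ∧ c i ≤ d i ∧ d i ≤ b) →
    (∀ i j, i ≠ j → Disjoint (Ioo (c i) (d i)) (Ioo (c j) (d j))) →
    (∑ i, (d i - c i)) < δ → (∑ i, |f (d i) - f (c i)|) < ε

open Metric
open scoped ENNReal NNReal Topology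

namespace ACAux

variable {T : ℝ}

lemma disjoint_Ioo_of_le {a b c d : ℝ} (h : b ≤ c) : Disjoint (Ioo a b) (Ioo c d) := by
  rw [Set.disjoint_left]
  rintro x ⟨_, hxb⟩ ⟨hxc, _⟩
  linarith

lemma continuousOn_of_absContOn {f : ℝ → ℝ} (hf : AbsContOn f 0 T) :
    ContinuousOn f (Icc 0 T) := by
  intro x hx
  rw [Metric.continuousWithinAt_iff]
  intro ε hε
  obtain ⟨δ, hδ, H⟩ := hf ε hε
  refine ⟨δ, hδ, fun y hy hyx => ?_⟩
  have hd2 : y - x < δ ∧ x - y < δ := by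
    rw [Real.dist_eq] at hyx
    exact abs_sub_lt_iff.mp hyx
  have hmm : max x y - min x y < δ := by
    rcases le_total x y with h | h
    · rw [max_eq_right h, min_eq_left h]; linarith [hd2.1]
    · rw [max_eq_left h, min_eq_right h]; linarith [hd2.2]
  have h1 := H 1 (fun _ => min x y) (fun _ => max x y) ?_ ?_ ?_
  · rw [Fin.sum_univ_one] at h1
    have heq : dist (f y) (f x) = |f (max x y) - f (min x y)| := by
      rw [Real.dist_eq]
      rcases le_total x y with h | h
      · rw [max_eq_right h, min_eq_left h, abs_sub_comm]
      · rw [max_eq_left h, min_eq_right h, abs_sub_comm]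
    rw [heq]; exact h1
  · intro i
    exact ⟨le_min hx.1 hy.1, min_le_max, max_le hx.2 hy.2⟩
  · intro i j hij; exact absurd (Subsingleton.elim i j) hij
  · rw [Fin.sum_univ_one]; exact hmm

/-- Finset-indexed version of absolute continuity. -/
lemma finset_version {f : ℝ → ℝ} (hf : AbsContOn f 0 T) {ε : ℝ} (hε : 0 < ε) :
    ∃ δ > (0:ℝ), ∀ (s : Finset ℕ) (c d : ℕ → ℝ),
      (∀ i ∈ s, 0 ≤ c i ∧ c i ≤ d i ∧ d i ≤ T) →
      (∀ i ∈ s, ∀ j ∈ s, i ≠ j → Disjoint (Ioo (c i) (d i)) (Ioo (c j) (d j))) →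
      (∑ i ∈ s, (d i - c i)) < δ → (∑ i ∈ s, |f (d i) - f (c i)|) < ε := by
  obtain ⟨δ, hδ, H⟩ := hf ε hε
  refine ⟨δ, hδ, fun s c d h1 h2 h3 => ?_⟩
  classical
  set e := s.equivFin with he
  set c' : Fin s.card → ℝ := fun i => c (e.symm i) with hc'
  set d' : Fin s.card → ℝ := fun i => d (e.symm i) with hd'
  have hs1 : ∀ (g : ℕ → ℝ), ∑ i : Fin s.card, g (e.symm i) = ∑ i ∈ s, g i := by
    intro g
    rw [Equiv.sum_comp e.symm (fun j : {x // x ∈ s} => g j)]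
    exact Finset.sum_coe_sort s g
  have h4 := H s.card c' d' ?_ ?_ ?_
  · calc ∑ i ∈ s, |f (d i) - f (c i)| = ∑ i : Fin s.card, |f (d' i) - f (c' i)| :=
          (hs1 (fun i => |f (d i) - f (c i)|)).symm
    _ < ε := h4
  · intro i; exact h1 _ (e.symm i).2
  · intro i j hij
    refine h2 _ (e.symm i).2 _ (e.symm j).2 ?_
    intro hcontr
    exact hij (e.symm.injective (Subtype.ext hcontr))
  · calc ∑ i : Fin s.card, (d' i - c' i) = ∑ i ∈ s, (d i - c i) := hs1 (fun i => d i - c i)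
    _ < δ := h3

/-- Master lemma: a function whose increments are dominated by a finite sum of increments of
absolutely continuous functions is absolutely continuous. -/
lemma absContOn_of_dominated {ι : Type} {h : ℝ → ℝ} {s : Finset ι} {F : ι → ℝ → ℝ} {C : ℝ}
    (hC : 0 < C)
    (hF : ∀ i ∈ s, AbsContOn (F i) 0 T)
    (hdom : ∀ u v, u ∈ Icc 0 T → v ∈ Icc 0 T → u ≤ v →
      |h v - h u| ≤ C * ∑ i ∈ s, |F i v - F i u|) :
    AbsContOn h 0 T := by
  classical
  intro ε hε
  have hε' : 0 < ε / (C * (s.card + 1)) := by positivity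
  have key : ∀ i ∈ s, ∃ δ > (0:ℝ), ∀ n : ℕ, ∀ c d : Fin n → ℝ,
      (∀ k, 0 ≤ c k ∧ c k ≤ d k ∧ d k ≤ T) →
      (∀ k l, k ≠ l → Disjoint (Ioo (c k) (d k)) (Ioo (c l) (d l))) →
      (∑ k, (d k - c k)) < δ → (∑ k, |F i (d k) - F i (c k)|) < ε / (C * (s.card + 1)) :=
    fun i hi => hF i hi _ hε'
  choose! δi hδi Hi using key
  by_cases hs : s.Nonempty
  · refine ⟨s.inf' hs δi, ?_, ?_⟩
    · obtain ⟨i, hi, hie⟩ := Finset.exists_mem_eq_inf' hs δi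
      rw [hie]; exact hδi i hi
    · intro m c d h1 h2 h3
      have hb : ∀ i ∈ s, (∑ k, |F i (d k) - F i (c k)|) < ε / (C * (s.card + 1)) := by
        intro i hi
        exact Hi i hi m c d h1 h2 (h3.trans_le (Finset.inf'_le δi hi))
      calc ∑ k, |h (d k) - h (c k)|
          ≤ ∑ k, C * ∑ i ∈ s, |F i (d k) - F i (c k)| := by
            apply Finset.sum_le_sum
            intro k _
            refine hdom (c k) (d k) ⟨(h1 k).1, ((h1 k).2.1.trans (h1 k).2.2)⟩
              ⟨(h1 k).1.trans (h1 k).2.1, (h1 k).2.2⟩ (h1 k).2.1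
        _ = C * ∑ i ∈ s, ∑ k, |F i (d k) - F i (c k)| := by
            rw [← Finset.mul_sum]; congr 1; exact Finset.sum_comm
        _ ≤ C * ∑ _i ∈ s, (ε / (C * (s.card + 1))) := by
            gcongr with i hi
            exact (hb i hi).le
        _ = C * (s.card * (ε / (C * (s.card + 1)))) := by
            rw [Finset.sum_const, nsmul_eq_mul]
        _ = ε * ((s.card : ℝ) / (s.card + 1)) := by
            field_simp
        _ < ε := by
            have hk : ((s.card : ℝ) / (s.card + 1)) < 1 := by
              rw [div_lt_one (by positivity)]; linarith
            have := mul_lt_mul_of_pos_left hk hε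
            simpa using this
  · refine ⟨1, one_pos, fun m c d h1 h2 h3 => ?_⟩
    rw [Finset.not_nonempty_iff_eq_empty] at hs
    subst hs
    have : ∀ k : Fin m, |h (d k) - h (c k)| ≤ 0 := by
      intro k
      have := hdom (c k) (d k) ⟨(h1 k).1, ((h1 k).2.1.trans (h1 k).2.2)⟩
        ⟨(h1 k).1.trans (h1 k).2.1, (h1 k).2.2⟩ (h1 k).2.1
      simpa using this
    calc ∑ k, |h (d k) - h (c k)| ≤ ∑ k : Fin m, (0:ℝ) := Finset.sum_le_sum fun k _ => this k
      _ = 0 := by simp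
      _ < ε := hε

lemma absContOn_const {x : ℝ} : AbsContOn (fun _ => x) 0 T := by
  intro ε hε
  exact ⟨1, one_pos, fun m c d _ _ _ => by simpa using hε⟩


lemma eVariationOn_small {f : ℝ → ℝ} (hf : AbsContOn f 0 T) :
    ∃ δ > (0:ℝ), ∀ u v : ℝ, 0 ≤ u → u ≤ v → v ≤ T → v - u < δ →
      eVariationOn f (Icc u v) ≤ 1 := by
  obtain ⟨δ, hδ, H⟩ := hf 1 one_pos
  refine ⟨δ, hδ, fun u v hu huv hvT hlen => ?_⟩
  apply iSup_le
  rintro ⟨m, u', hu'⟩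
  obtain ⟨hmono, hmem⟩ := hu'
  have key := H m (fun i : Fin m => u' i) (fun i : Fin m => u' (i + 1)) ?_ ?_ ?_
  · calc ∑ i ∈ Finset.range m, edist (f (u' (i+1))) (f (u' i))
        = ∑ i ∈ Finset.range m, ENNReal.ofReal |f (u' (i+1)) - f (u' i)| := by
          apply Finset.sum_congr rfl
          intro i _
          rw [edist_dist, Real.dist_eq]
      _ = ENNReal.ofReal (∑ i ∈ Finset.range m, |f (u' (i+1)) - f (u' i)|) := by
          rw [ENNReal.ofReal_sum_of_nonneg]
          intro i _; exact abs_nonneg _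
      _ ≤ 1 := by
          rw [← ENNReal.ofReal_one]
          apply ENNReal.ofReal_le_ofReal
          have := key
          rw [← Fin.sum_univ_eq_sum_range (fun i => |f (u' (i+1)) - f (u' i)|) m]
          exact le_of_lt this
  · intro i
    have h1 := hmem i
    have h2 := hmem (i + 1)
    exact ⟨hu.trans h1.1, hmono (Nat.le_succ _), h2.2.trans hvT⟩
  · intro i j hij
    rcases Ne.lt_or_gt hij with h | h
    · exact disjoint_Ioo_of_le (hmono (Nat.succ_le_of_lt h))
    · exact (disjoint_Ioo_of_le (hmono (Nat.succ_le_of_lt h))).symm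
  · calc ∑ i : Fin m, (u' (i+1) - u' i)
        = ∑ i ∈ Finset.range m, (u' (i+1) - u' i) :=
          Fin.sum_univ_eq_sum_range (fun i => u' (i+1) - u' i) m
      _ = u' m - u' 0 := Finset.sum_range_sub (fun i => u' i) m
      _ ≤ v - u := by
          have h1 := hmem 0
          have h2 := hmem m
          have := h1.1; have := h2.2
          linarith [h1.1, h2.2]
      _ < δ := hlen

lemma locallyBoundedVariationOn_of_absContOn {f : ℝ → ℝ} (hT : 0 ≤ T) (hf : AbsContOn f 0 T) :
    LocallyBoundedVariationOn f (Icc 0 T) := by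
  obtain ⟨δ, hδ, H⟩ := eVariationOn_small hf
  set δ' := δ / 2 with hδ'
  have hδ'0 : 0 < δ' := by positivity
  have main : ∀ k : ℕ, eVariationOn f (Icc 0 T ∩ Icc 0 (k * δ')) ≤ (k : ℝ≥0∞) := by
    intro k
    induction k with
    | zero =>
      rw [Nat.cast_zero]
      have hsub : Icc (0:ℝ) T ∩ Icc 0 (0 * δ') ⊆ {0} := by
        intro x hx
        simp only [zero_mul] at hx
        have := hx.2
        simp only [Set.mem_Icc] at this
        have : x = 0 := le_antisymm this.2 this.1
        simp [this]
      calc eVariationOn f (Icc 0 T ∩ Icc 0 (0 * δ')) ≤ eVariationOn f {0} :=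
            eVariationOn.mono f hsub
        _ = 0 := eVariationOn.subsingleton f (Set.subsingleton_singleton)
        _ ≤ _ := zero_le
    | succ k ih =>
      simp only [Nat.cast_succ]
      by_cases hk : (k : ℝ) * δ' ≤ T
      · have hsplit := eVariationOn.Icc_add_Icc f (s := Icc 0 T)
          (a := (0:ℝ)) (b := (k:ℝ) * δ') (c := ((k:ℕ)+1 : ℝ) * δ')
          (by positivity) (by nlinarith) ⟨by positivity, hk⟩
        have hpiece : eVariationOn f (Icc 0 T ∩ Icc ((k:ℝ) * δ') (((k:ℕ)+1 : ℝ) * δ')) ≤ 1 := by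
          have hsub : Icc (0:ℝ) T ∩ Icc ((k:ℝ) * δ') (((k:ℕ)+1:ℝ) * δ') ⊆
              Icc ((k:ℝ) * δ') (min T (((k:ℕ)+1:ℝ) * δ')) := by
            rintro x ⟨hx1, hx2⟩
            exact ⟨hx2.1, le_min hx1.2 hx2.2⟩
          refine (eVariationOn.mono f hsub).trans ?_
          apply H
          · positivity
          · exact le_min hk (by nlinarith)
          · exact min_le_left _ _
          · have : min T (((k:ℕ)+1:ℝ) * δ') ≤ ((k:ℕ)+1:ℝ) * δ' := min_le_right _ _
            have h2 : ((k:ℕ)+1:ℝ) * δ' - (k:ℝ) * δ' = δ' := by ring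
            have h3 : δ' < δ := by linarith
            linarith [min_le_right T (((k:ℕ)+1:ℝ) * δ')]
        calc eVariationOn f (Icc 0 T ∩ Icc 0 (((k:ℕ)+1:ℝ) * δ'))
            = eVariationOn f (Icc 0 T ∩ Icc 0 ((k:ℝ) * δ')) +
              eVariationOn f (Icc 0 T ∩ Icc ((k:ℝ)*δ') (((k:ℕ)+1:ℝ) * δ')) := by
              rw [hsplit]
          _ ≤ (k : ℝ≥0∞) + 1 := add_le_add ih hpiece
      · push_neg at hk
        have hsub : Icc (0:ℝ) T ∩ Icc 0 (((k:ℕ)+1:ℝ) * δ') = Icc 0 T ∩ Icc 0 ((k:ℝ) * δ') := by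
          apply Set.eq_of_subset_of_subset
          · rintro x ⟨hx1, _⟩
            exact ⟨hx1, ⟨hx1.1, hx1.2.trans hk.le⟩⟩
          · rintro x ⟨hx1, _⟩
            refine ⟨hx1, ⟨hx1.1, hx1.2.trans ?_⟩⟩
            nlinarith
        rw [hsub]
        exact ih.trans (by
          have : (k : ℝ≥0∞) ≤ (k : ℝ≥0∞) + 1 := le_self_add
          exact this)
  obtain ⟨k, hk⟩ := exists_nat_ge (T / δ')
  have hkT : T ≤ (k : ℝ) * δ' := by
    rw [div_le_iff₀ hδ'0] at hk
    linarith
  have hfull : Icc (0:ℝ) T ∩ Icc 0 ((k:ℝ) * δ') = Icc 0 T := by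
    apply Set.inter_eq_self_of_subset_left
    intro x hx
    exact ⟨hx.1, hx.2.trans hkT⟩
  have hbv : BoundedVariationOn f (Icc 0 T) := by
    unfold BoundedVariationOn
    rw [← hfull]
    exact ne_top_of_le_ne_top (ENNReal.natCast_ne_top k) (main k)
  intro a b _ _
  exact BoundedVariationOn.mono hbv Set.inter_subset_left

lemma ae_hasDerivAt_of_absContOn {f : ℝ → ℝ} (hT : 0 < T) (hf : AbsContOn f 0 T) :
    ∀ᵐ x ∂(volume.restrict (Ioo 0 T)), HasDerivAt f (deriv f x) x := by
  have h1 := (locallyBoundedVariationOn_of_absContOn hT.le hf).ae_differentiableWithinAt_of_mem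
  rw [ae_restrict_iff' measurableSet_Ioo]
  filter_upwards [h1] with x hx hxI
  have h2 : DifferentiableWithinAt ℝ f (Icc 0 T) x := hx (Ioo_subset_Icc_self hxI)
  have h3 : DifferentiableAt ℝ f x := h2.differentiableAt (Icc_mem_nhds hxI.1 hxI.2)
  exact h3.hasDerivAt


/-- Cousin's lemma: existence of a δ(x)-fine tagged partition of `[a,b]`. -/
lemma cousin {a b : ℝ} (hab : a ≤ b) {r : ℝ → ℝ} (hr : ∀ x ∈ Icc a b, 0 < r x) :
    ∃ (m : ℕ) (x ξ : ℕ → ℝ), x 0 = a ∧ x m = b ∧ (∀ i, i < m → x i ≤ x (i + 1)) ∧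
      (∀ i, i < m → ξ i ∈ Icc (x i) (x (i + 1)) ∧ ξ i ∈ Icc a b ∧
        Icc (x i) (x (i + 1)) ⊆ Metric.ball (ξ i) (r (ξ i))) := by
  classical
  set P : ℝ → Prop := fun y => ∃ (m : ℕ) (x ξ : ℕ → ℝ), x 0 = a ∧ x m = y ∧
      (∀ i, i < m → x i ≤ x (i + 1)) ∧
      (∀ i, i < m → ξ i ∈ Icc (x i) (x (i + 1)) ∧ ξ i ∈ Icc a b ∧
        Icc (x i) (x (i + 1)) ⊆ Metric.ball (ξ i) (r (ξ i))) with hP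
  set S : Set ℝ := {y | y ∈ Icc a b ∧ P y} with hS
  have hext : ∀ y z w, y ∈ S → y ≤ z → z ∈ Icc a b → w ∈ Icc y z → w ∈ Icc a b →
      Icc y z ⊆ Metric.ball w (r w) → z ∈ S := by
    rintro y z w ⟨hyI, m, x, ξ, h0, hm, hmono, hprop⟩ hyz hzI hw hwI hsub
    refine ⟨hzI, m + 1, fun i => if i ≤ m then x i else z,
      fun i => if i = m then w else ξ i, ?_, ?_, ?_, ?_⟩
    · simp [Nat.zero_le, h0]
    · simp
    · intro i hi
      rcases Nat.lt_or_ge i m with h | h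
      · have h1 : i ≤ m := h.le
        have h2 : i + 1 ≤ m := h
        simp only [if_pos h1, if_pos h2]
        exact hmono i h
      · have him : i = m := by omega
        subst him
        simp only [le_refl, if_pos, if_neg (by omega : ¬ i + 1 ≤ i)]
        rw [hm]
        exact hyz
    · intro i hi
      rcases Nat.lt_or_ge i m with h | h
      · have h1 : i ≤ m := h.le
        have h2 : i + 1 ≤ m := h
        simp only [if_pos h1, if_pos h2, if_neg (Nat.ne_of_lt h)]
        exact hprop i h
      · have him : i = m := by omega
        subst him
        simp only [le_refl, if_pos, if_neg (by omega : ¬ i + 1 ≤ i), if_pos rfl]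
        rw [hm]
        exact ⟨hw, hwI, hsub⟩
  have haS : a ∈ S := by
    refine ⟨⟨le_refl a, hab⟩, 0, fun _ => a, fun _ => a, rfl, rfl, ?_, ?_⟩
    · intro i hi; omega
    · intro i hi; omega
  have hne : S.Nonempty := ⟨a, haS⟩
  have hbdd : BddAbove S := ⟨b, fun y hy => hy.1.2⟩
  set c := sSup S with hc
  have hcI : c ∈ Icc a b := ⟨le_csSup hbdd haS, csSup_le hne (fun y hy => hy.1.2)⟩
  have hrc := hr c hcI
  have hcS : c ∈ S := by
    obtain ⟨y, hyS, hy⟩ := exists_lt_of_lt_csSup hne (show c - r c < c by linarith)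
    have hyc : y ≤ c := le_csSup hbdd hyS
    refine hext y c c hyS hyc hcI ⟨hyc, le_refl c⟩ hcI ?_
    intro z hz
    rw [Metric.mem_ball, Real.dist_eq, abs_of_nonpos (by linarith [hz.2] : z - c ≤ 0)]
    have := hz.1
    linarith
  rcases eq_or_lt_of_le hcI.2 with hcb | hcb
  · obtain ⟨m, x, ξ, h0, hm, h1, h2⟩ := hcS.2
    exact ⟨m, x, ξ, h0, hcb ▸ hm, h1, h2⟩
  · exfalso
    set c' := min b (c + r c / 2) with hc'
    have hcc' : c < c' := lt_min hcb (by linarith)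
    have hc'I : c' ∈ Icc a b := ⟨hcI.1.trans hcc'.le, min_le_left _ _⟩
    have : c' ∈ S := by
      refine hext c c' c hcS hcc'.le hc'I ⟨le_refl c, hcc'.le⟩ hcI ?_
      intro z hz
      rw [Metric.mem_ball, Real.dist_eq]
      have h1 : z - c ≤ c' - c := by linarith [hz.2]
      have h2 : c' - c ≤ r c / 2 := by
        have := min_le_right b (c + r c / 2)
        simp only [hc']
        linarith [min_le_right b (c + r c / 2)]
      rw [abs_of_nonneg (by linarith [hz.1])]
      linarith
    have := le_csSup hbdd this
    rw [← hc] at this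
    linarith

lemma partition_chain {m : ℕ} {x : ℕ → ℝ} (hmono : ∀ i, i < m → x i ≤ x (i + 1)) :
    ∀ j, j ≤ m → ∀ i, i ≤ j → x i ≤ x j := by
  intro j
  induction j with
  | zero =>
    intro _ i hi
    have : i = 0 := by omega
    subst this; exact le_refl _
  | succ k ih =>
    intro hk i hij
    rcases Nat.lt_or_ge i (k+1) with h | h
    · have : i ≤ k := by omega
      exact (ih (by omega) i this).trans (hmono k (by omega))
    · have : i = k + 1 := by omega
      subst this; exact le_refl _

/-- Core lemma: an absolutely continuous function with a.e. nonpositive derivative on `(0,t)`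
satisfies `φ t ≤ φ 0`. -/
theorem core_nonpos {φ : ℝ → ℝ} {t : ℝ} (hφ : AbsContOn φ 0 T) (ht : 0 < t) (htT : t ≤ T)
    (hd : ∀ᵐ x ∂(volume.restrict (Ioo 0 t)), ∃ d, d ≤ (0:ℝ) ∧ HasDerivAt φ d x) :
    φ t ≤ φ 0 := by
  classical
  have key : ∀ ε > (0:ℝ), φ t - φ 0 ≤ ε * t + ε := by
    intro ε hε
    obtain ⟨δ, hδ, hAC⟩ := finset_version hφ hε
    set Good : ℝ → Prop := fun x => x ∈ Ioo 0 t ∧ ∃ d, d ≤ (0:ℝ) ∧ HasDerivAt φ d x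
      with hGoodDef
    have hZ0 : volume {x | x ∈ Ioo 0 t ∧ ¬ ∃ d, d ≤ (0:ℝ) ∧ HasDerivAt φ d x} = 0 := by
      rw [ae_restrict_iff' measurableSet_Ioo] at hd
      rw [ae_iff] at hd
      apply measure_mono_null _ hd
      intro y hy
      simp only [Set.mem_setOf_eq] at hy ⊢
      exact fun himp => hy.2 (himp hy.1)
    have hZ : volume ({x | x ∈ Ioo 0 t ∧ ¬ ∃ d, d ≤ (0:ℝ) ∧ HasDerivAt φ d x}
        ∪ ({0, t} : Set ℝ)) = 0 := by
      apply measure_union_null hZ0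
      have : ({0, t} : Set ℝ).Countable := (Set.countable_singleton _).insert _
      exact this.measure_zero _
    obtain ⟨U, hUsub, hUopen, hUvol⟩ := Set.exists_isOpen_lt_of_lt _ (ENNReal.ofReal δ)
      (by rw [hZ]; exact ENNReal.ofReal_pos.mpr hδ)
    have hgauge : ∀ x ∈ Icc (0:ℝ) t, ∃ ρ, 0 < ρ ∧
        (Good x → ∀ u v, u ≤ x → x ≤ v → Icc u v ⊆ Metric.ball x ρ →
          φ v - φ u ≤ ε * (v - u)) ∧
        (¬ Good x → Metric.ball x ρ ⊆ U) := by
      intro x hx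
      by_cases hGx : Good x
      · obtain ⟨d, hd0, hder⟩ := hGx.2
        have hlo := hasDerivAt_iff_isLittleO.mp hder
        have hev := hlo.def hε
        rw [Metric.eventually_nhds_iff] at hev
        obtain ⟨ρ, hρ, hball⟩ := hev
        refine ⟨ρ, hρ, fun _ u v hux hxv hsub => ?_, fun h => absurd hGx h⟩
        have huv : u ≤ v := hux.trans hxv
        have hu : dist u x < ρ := by
          have h' : u ∈ Metric.ball x ρ := hsub ⟨le_refl u, huv⟩
          rwa [Metric.mem_ball] at h'
        have hv : dist v x < ρ := by
          have h' : v ∈ Metric.ball x ρ := hsub ⟨huv, le_refl v⟩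
          rwa [Metric.mem_ball] at h'
        have h1 := hball hv
        have h2 := hball hu
        simp only [Real.norm_eq_abs, smul_eq_mul] at h1 h2
        have e1 : |v - x| = v - x := abs_of_nonneg (by linarith)
        have e2 : |u - x| = -(u - x) := abs_of_nonpos (by linarith)
        rw [e1] at h1
        rw [e2] at h2
        have h1' := (abs_le.mp h1).2
        have h2' := (abs_le.mp h2).1
        have hr1 : (v - x) * d + (x - u) * d = (v - u) * d := by ring
        have hr2 : (v - u) * d ≤ 0 := mul_nonpos_of_nonneg_of_nonpos (by linarith) hd0
        nlinarith [h1', h2', hr1, hr2]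
      · have hxU : x ∈ U := by
          apply hUsub
          by_cases hio : x ∈ Ioo 0 t
          · left; exact ⟨hio, fun hcon => hGx ⟨hio, hcon⟩⟩
          · right
            simp only [Set.mem_insert_iff, Set.mem_singleton_iff]
            simp only [Set.mem_Ioo, not_and_or, not_lt] at hio
            rcases hio with h | h
            · left; linarith [hx.1]
            · right; linarith [hx.2]
        obtain ⟨ρ, hρ, hball⟩ := Metric.isOpen_iff.mp hUopen x hxU
        exact ⟨ρ, hρ, fun h => absurd h hGx, fun _ => hball⟩
    choose! ρf hρf hgood hbadU using hgauge
    obtain ⟨m, x, ξ, hx0, hxm, hmono, hprop⟩ := cousin ht.le (r := ρf)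
      (fun y hy => hρf y hy)
    have hchain := partition_chain hmono
    have xmem : ∀ i, i ≤ m → x i ∈ Icc (0:ℝ) t := by
      intro i hi
      constructor
      · rw [← hx0]; exact hchain i hi 0 (Nat.zero_le i)
      · rw [← hxm]; exact hchain m (le_refl m) i hi
    have htel : φ t - φ 0 = ∑ i ∈ Finset.range m, (φ (x (i+1)) - φ (x i)) := by
      rw [Finset.sum_range_sub (fun i => φ (x i)) m, hx0, hxm]
    set bad : Finset ℕ := (Finset.range m).filter (fun i => ¬ Good (ξ i)) with hbadDef
    have hdisjIoo : ∀ i ∈ Finset.range m, ∀ j ∈ Finset.range m, i ≠ j →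
        Disjoint (Ioo (x i) (x (i+1))) (Ioo (x j) (x (j+1))) := by
      intro i hi j hj hij
      rcases Ne.lt_or_gt hij with h | h
      · exact disjoint_Ioo_of_le (hchain j (Finset.mem_range.mp hj).le (i+1) h)
      · exact (disjoint_Ioo_of_le (hchain i (Finset.mem_range.mp hi).le (j+1) h)).symm
    have hbadSum : ∑ i ∈ bad, |φ (x (i+1)) - φ (x i)| < ε := by
      apply hAC bad x (fun i => x (i+1))
      · intro i hi
        have hi' : i < m := Finset.mem_range.mp (Finset.mem_filter.mp hi).1
        exact ⟨(xmem i hi'.le).1, hmono i hi', (xmem (i+1) hi').2.trans htT⟩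
      · intro i hi j hj hij
        exact hdisjIoo i (Finset.mem_filter.mp hi).1 j (Finset.mem_filter.mp hj).1 hij
      · have hsubU : ∀ i ∈ bad, Ioo (x i) (x (i+1)) ⊆ U := by
          intro i hi
          have hi' : i < m := Finset.mem_range.mp (Finset.mem_filter.mp hi).1
          have hnG : ¬ Good (ξ i) := (Finset.mem_filter.mp hi).2
          have hp := hprop i hi'
          exact (Set.Ioo_subset_Icc_self.trans hp.2.2).trans (hbadU (ξ i) hp.2.1 hnG)
        have hdisj : (bad : Set ℕ).PairwiseDisjoint (fun i => Ioo (x i) (x (i+1))) := by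
          intro i hi j hj hij
          exact hdisjIoo i (Finset.mem_filter.mp hi).1 j (Finset.mem_filter.mp hj).1 hij
        have hmeas := measure_biUnion_finset (μ := volume) hdisj (fun i _ => measurableSet_Ioo)
        have hUb : volume (⋃ i ∈ bad, Ioo (x i) (x (i+1))) ≤ volume U :=
          measure_mono (Set.iUnion₂_subset hsubU)
        have hlen : ∑ i ∈ bad, volume (Ioo (x i) (x (i+1))) < ENNReal.ofReal δ := by
          rw [← hmeas]; exact lt_of_le_of_lt hUb hUvol
        have hlen2 : ENNReal.ofReal (∑ i ∈ bad, (x (i+1) - x i)) < ENNReal.ofReal δ := by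
          rw [ENNReal.ofReal_sum_of_nonneg (fun i hi => by
            have hi' : i < m := Finset.mem_range.mp (Finset.mem_filter.mp hi).1
            linarith [hmono i hi'])]
          calc ∑ i ∈ bad, ENNReal.ofReal (x (i+1) - x i)
              = ∑ i ∈ bad, volume (Ioo (x i) (x (i+1))) := by
                apply Finset.sum_congr rfl
                intro i _
                rw [Real.volume_Ioo]
            _ < ENNReal.ofReal δ := hlen
        rwa [ENNReal.ofReal_lt_ofReal_iff hδ] at hlen2
    have hgoodSum : ∀ i ∈ (Finset.range m).filter (fun i => ¬ ¬ Good (ξ i)),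
        φ (x (i+1)) - φ (x i) ≤ ε * (x (i+1) - x i) := by
      intro i hi
      obtain ⟨hi1, hi2⟩ := Finset.mem_filter.mp hi
      have hGi : Good (ξ i) := not_not.mp hi2
      have hp := hprop i (Finset.mem_range.mp hi1)
      exact hgood (ξ i) hp.2.1 hGi (x i) (x (i+1)) hp.1.1 hp.1.2 hp.2.2
    calc φ t - φ 0 = ∑ i ∈ Finset.range m, (φ (x (i+1)) - φ (x i)) := htel
      _ = (∑ i ∈ bad, (φ (x (i+1)) - φ (x i))) +
          ∑ i ∈ (Finset.range m).filter (fun i => ¬ ¬ Good (ξ i)),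
            (φ (x (i+1)) - φ (x i)) := by
          rw [hbadDef]
          exact (Finset.sum_filter_add_sum_filter_not (Finset.range m)
            (fun i => ¬ Good (ξ i)) _).symm
      _ ≤ ε + ε * t := by
          have hb : ∑ i ∈ bad, (φ (x (i+1)) - φ (x i)) ≤ ε := by
            calc ∑ i ∈ bad, (φ (x (i+1)) - φ (x i))
                ≤ ∑ i ∈ bad, |φ (x (i+1)) - φ (x i)| :=
                  Finset.sum_le_sum (fun i _ => le_abs_self _)
              _ ≤ ε := hbadSum.le
          have hg : ∑ i ∈ (Finset.range m).filter (fun i => ¬ ¬ Good (ξ i)),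
              (φ (x (i+1)) - φ (x i)) ≤ ε * t := by
            calc ∑ i ∈ (Finset.range m).filter (fun i => ¬ ¬ Good (ξ i)),
                (φ (x (i+1)) - φ (x i))
                ≤ ∑ i ∈ (Finset.range m).filter (fun i => ¬ ¬ Good (ξ i)),
                  ε * (x (i+1) - x i) := Finset.sum_le_sum hgoodSum
              _ ≤ ∑ i ∈ Finset.range m, ε * (x (i+1) - x i) := by
                apply Finset.sum_le_sum_of_subset_of_nonneg (Finset.filter_subset _ _)
                intro i hi _
                have hi' : i < m := Finset.mem_range.mp hi
                have := hmono i hi'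
                have : (0:ℝ) ≤ x (i+1) - x i := by linarith
                exact mul_nonneg hε.le this
              _ = ε * t := by
                rw [← Finset.mul_sum, Finset.sum_range_sub (fun i => x i) m, hx0, hxm, sub_zero]
          linarith
      _ = ε * t + ε := by ring
  have : ∀ ε' > (0:ℝ), φ t ≤ φ 0 + ε' := by
    intro ε' hε'
    have h1 := key (ε' / (t + 1)) (by positivity)
    have h2 : ε' / (t+1) * t + ε' / (t+1) = ε' := by field_simp
    linarith
  exact le_of_forall_pos_le_add this


lemma Ioc_disjoint_of_Ioo_disjoint {c d c' d' : ℝ} (hcd : c ≤ d) (hcd' : c' ≤ d')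
    (h : Disjoint (Ioo c d) (Ioo c' d')) : Disjoint (Ioc c d) (Ioc c' d') := by
  rcases eq_or_lt_of_le hcd with rfl | h1
  · simp
  rcases eq_or_lt_of_le hcd' with rfl | h2
  · simp
  have hord : d ≤ c' ∨ d' ≤ c := by
    by_contra hcon
    push_neg at hcon
    obtain ⟨hc1, hc2⟩ := hcon
    set z := (max c c' + min d d') / 2 with hz
    have hmm : max c c' < min d d' := by
      rcases max_cases c c' with ⟨he, _⟩ | ⟨he, _⟩ <;> rcases min_cases d d' with ⟨he2, _⟩ | ⟨he2, _⟩ <;>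
        rw [he, he2] <;> linarith
    have hz1 : z ∈ Ioo c d := by
      constructor
      · calc c ≤ max c c' := le_max_left _ _
          _ < z := by rw [hz]; linarith
      · calc z < min d d' := by rw [hz]; linarith
          _ ≤ d := min_le_left _ _
    have hz2 : z ∈ Ioo c' d' := by
      constructor
      · calc c' ≤ max c c' := le_max_right _ _
          _ < z := by rw [hz]; linarith
      · calc z < min d d' := by rw [hz]; linarith
          _ ≤ d' := min_le_right _ _
    exact Set.disjoint_left.mp h hz1 hz2
  rcases hord with h3 | h3
  · rw [Set.disjoint_left]
    rintro z ⟨_, hz2⟩ ⟨hz3, _⟩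
    linarith
  · rw [Set.disjoint_left]
    rintro z ⟨hz1, _⟩ ⟨_, hz4⟩
    linarith

lemma primitive_increment {g : ℝ → ℝ} (hg : Integrable g (volume : Measure ℝ))
    {u v : ℝ} (hu : (-1:ℝ) ≤ u) (huv : u ≤ v) :
    (∫ s in Ioc (-1:ℝ) v, g s) - ∫ s in Ioc (-1:ℝ) u, g s = ∫ s in Ioc u v, g s := by
  have hdis : Disjoint (Ioc (-1:ℝ) u) (Ioc u v) := by
    rw [Set.disjoint_left]
    rintro z ⟨_, hz2⟩ ⟨hz3, _⟩
    linarith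
  rw [← Set.Ioc_union_Ioc_eq_Ioc hu huv,
    setIntegral_union hdis measurableSet_Ioc hg.integrableOn hg.integrableOn]
  ring

/-- The primitive of an integrable function is absolutely continuous. -/
lemma primitive_absContOn {g : ℝ → ℝ} (hg : Integrable g (volume : Measure ℝ)) :
    AbsContOn (fun y => ∫ u in Ioc (-1:ℝ) y, g u) 0 T := by
  intro ε hε
  obtain ⟨δ, hδ0, hsmall⟩ := exists_pos_setLIntegral_lt_of_measure_lt (μ := volume)
    (f := fun x => (‖g x‖₊ : ℝ≥0∞)) (ne_of_lt hg.2)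
    (ε := ENNReal.ofReal ε) (ENNReal.ofReal_pos.mpr hε).ne'
  obtain ⟨c0, hc01, hc02⟩ := exists_between hδ0
  have hc0top : c0 ≠ ⊤ := ne_top_of_lt hc02
  set δr := c0.toReal with hδr
  have hδr0 : 0 < δr := ENNReal.toReal_pos hc01.ne' hc0top
  refine ⟨δr, hδr0, fun m c d h1 h2 h3 => ?_⟩
  have hcd : ∀ i : Fin m, c i ≤ d i := fun i => (h1 i).2.1
  have key : ∀ i : Fin m,
      |(∫ u in Ioc (-1:ℝ) (d i), g u) - ∫ u in Ioc (-1:ℝ) (c i), g u|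
        ≤ (∫⁻ u in Ioc (c i) (d i), ‖g u‖₊).toReal := by
    intro i
    rw [primitive_increment hg (by linarith [(h1 i).1]) (hcd i)]
    calc |∫ u in Ioc (c i) (d i), g u| ≤ ∫ u in Ioc (c i) (d i), |g u| := by
          simpa [Real.norm_eq_abs] using
            norm_integral_le_integral_norm (μ := volume.restrict (Ioc (c i) (d i))) g
      _ = (∫⁻ u in Ioc (c i) (d i), ‖g u‖₊).toReal := by
          rw [show (∫⁻ u in Ioc (c i) (d i), (‖g u‖₊ : ℝ≥0∞)) = ∫⁻ u in Ioc (c i) (d i), ‖g u‖ₑ from rfl, ← ofReal_integral_norm_eq_lintegral_enorm hg.integrableOn, ENNReal.toReal_ofReal]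
          · simp [Real.norm_eq_abs]
          · positivity
  have hfin : ∀ i : Fin m, (∫⁻ u in Ioc (c i) (d i), ‖g u‖₊) ≠ ⊤ := by
    intro i
    exact ne_top_of_le_ne_top (ne_of_lt hg.2)
      (lintegral_mono_set (Set.subset_univ _) |>.trans (by rw [Measure.restrict_univ]; rfl))
  have hUdisj : ((Finset.univ : Finset (Fin m)) : Set (Fin m)).PairwiseDisjoint
      (fun i => Ioc (c i) (d i)) := by
    intro i _ j _ hij
    exact Ioc_disjoint_of_Ioo_disjoint (hcd i) (hcd j) (h2 i j hij)
  have hsumL : ∑ i : Fin m, (∫⁻ u in Ioc (c i) (d i), ‖g u‖₊)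
      = ∫⁻ u in ⋃ i ∈ (Finset.univ : Finset (Fin m)), Ioc (c i) (d i), ‖g u‖₊ := by
    rw [lintegral_biUnion_finset hUdisj (fun i _ => measurableSet_Ioc)]
  have hvol : volume (⋃ i ∈ (Finset.univ : Finset (Fin m)), Ioc (c i) (d i)) < δ := by
    calc volume (⋃ i ∈ (Finset.univ : Finset (Fin m)), Ioc (c i) (d i))
        = ∑ i : Fin m, volume (Ioc (c i) (d i)) :=
          measure_biUnion_finset hUdisj (fun i _ => measurableSet_Ioc)
      _ = ENNReal.ofReal (∑ i : Fin m, (d i - c i)) := by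
          rw [ENNReal.ofReal_sum_of_nonneg (fun i _ => by linarith [hcd i])]
          exact Finset.sum_congr rfl (fun i _ => Real.volume_Ioc)
      _ < ENNReal.ofReal δr := (ENNReal.ofReal_lt_ofReal_iff hδr0).mpr h3
      _ ≤ c0 := by rw [hδr]; rw [ENNReal.ofReal_toReal hc0top]
      _ < δ := hc02
  have hsmall2 := hsmall _ hvol
  calc ∑ i : Fin m, |(∫ u in Ioc (-1:ℝ) (d i), g u) - ∫ u in Ioc (-1:ℝ) (c i), g u|
      ≤ ∑ i : Fin m, (∫⁻ u in Ioc (c i) (d i), ‖g u‖₊).toReal :=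
        Finset.sum_le_sum (fun i _ => key i)
    _ = (∑ i : Fin m, ∫⁻ u in Ioc (c i) (d i), ‖g u‖₊).toReal := by
        rw [ENNReal.toReal_sum (fun i _ => hfin i)]
    _ < ε := by
        rw [hsumL]
        have h4 : (∫⁻ u in ⋃ i ∈ (Finset.univ : Finset (Fin m)), Ioc (c i) (d i), ‖g u‖₊)
            < ENNReal.ofReal ε := hsmall2
        calc (∫⁻ u in ⋃ i ∈ (Finset.univ : Finset (Fin m)), Ioc (c i) (d i), ‖g u‖₊).toReal
            < (ENNReal.ofReal ε).toReal := by
              apply ENNReal.toReal_strict_mono (by simp) h4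
          _ = ε := ENNReal.toReal_ofReal hε.le

/-- Lebesgue differentiation: the primitive has the integrand as derivative a.e. -/
lemma primitive_ae_hasDerivAt {g : ℝ → ℝ} (hg : Integrable g (volume : Measure ℝ)) :
    ∀ᵐ x : ℝ, 0 < x → HasDerivAt (fun y => ∫ u in Ioc (-1:ℝ) y, g u) (g x) x := by
  set v := IsUnifLocDoublingMeasure.vitaliFamily (volume : Measure ℝ) 1 with hv
  filter_upwards [v.ae_tendsto_average_norm_sub hg.locallyIntegrable] with x hx hx0
  set H : ℝ → ℝ := fun y => ∫ u in Ioc (-1:ℝ) y, g u with hH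
  have hconst : ∀ a b : ℝ, a ≤ b → ∫ _u in Ioc a b, g x = (b - a) * g x := by
    intro a b hab
    rw [setIntegral_const, measureReal_def, Real.volume_Ioc, ENNReal.toReal_ofReal (by linarith), smul_eq_mul]
  have hbound : ∀ a b : ℝ, a ≤ b → |(∫ u in Ioc a b, g u) - (b - a) * g x|
      ≤ ∫ u in Icc a b, ‖g u - g x‖ := by
    intro a b hab
    rw [← hconst a b hab, ← integral_sub hg.integrableOn
      ((integrableOn_const_iff).mpr (Or.inr (by rw [Real.volume_Ioc]; exact ENNReal.ofReal_lt_top)))]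
    rw [integral_Icc_eq_integral_Ioc]
    simpa [Real.norm_eq_abs] using
      norm_integral_le_integral_norm (μ := volume.restrict (Ioc a b)) (fun u => g u - g x)
  rw [hasDerivAt_iff_tendsto_slope, ← nhdsLT_sup_nhdsGT, tendsto_sup]
  constructor
  · have tendL : Tendsto (fun y => ⨍ u in Icc y x, ‖g u - g x‖) (𝓝[<] x) (𝓝 0) :=
      hx.comp (Real.tendsto_Icc_vitaliFamily_left x)
    have key : Tendsto (fun y => slope H x y - g x) (𝓝[<] x) (𝓝 0) := by
      apply squeeze_zero_norm' _ tendL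
      filter_upwards [self_mem_nhdsWithin, mem_nhdsWithin_of_mem_nhds (Ioi_mem_nhds hx0)]
        with y hy hy0
      have hyx : y < x := hy
      have hy0' : (0:ℝ) < y := hy0
      have hne : x - y ≠ 0 := by linarith
      have hne' : y - x ≠ 0 := by linarith
      have hincr : H x - H y = ∫ s in Ioc y x, g s :=
        primitive_increment hg (by linarith) hyx.le
      have hslope : slope H x y - g x = ((H x - H y) - (x - y) * g x) / (x - y) := by
        rw [slope_def_field]
        field_simp
        ring
      rw [Real.norm_eq_abs, hslope, abs_div, abs_of_pos (by linarith : (0:ℝ) < x - y), hincr]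
      rw [div_le_iff₀ (by linarith : (0:ℝ) < x - y)]
      have hb := hbound y x hyx.le
      have havg : (⨍ u in Icc y x, ‖g u - g x‖) * (x - y) = ∫ u in Icc y x, ‖g u - g x‖ := by
        rw [setAverage_eq, measureReal_def, Real.volume_Icc, ENNReal.toReal_ofReal (by linarith), smul_eq_mul]
        field_simp
      linarith [hb]
    have := key.add_const (g x)
    simpa using this
  · have tendR : Tendsto (fun y => ⨍ u in Icc x y, ‖g u - g x‖) (𝓝[>] x) (𝓝 0) :=
      hx.comp (Real.tendsto_Icc_vitaliFamily_right x)
    have key : Tendsto (fun y => slope H x y - g x) (𝓝[>] x) (𝓝 0) := by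
      apply squeeze_zero_norm' _ tendR
      filter_upwards [self_mem_nhdsWithin] with y hy
      have hyx : x < y := hy
      have hne : y - x ≠ 0 := by linarith
      have hincr : H y - H x = ∫ s in Ioc x y, g s :=
        primitive_increment hg (by linarith) hyx.le
      have hslope : slope H x y - g x = ((H y - H x) - (y - x) * g x) / (y - x) := by
        rw [slope_def_field]
        field_simp
      rw [Real.norm_eq_abs, hslope, abs_div, abs_of_pos (by linarith : (0:ℝ) < y - x), hincr]
      rw [div_le_iff₀ (by linarith : (0:ℝ) < y - x)]
      have hb := hbound x y hyx.le
      have havg : (⨍ u in Icc x y, ‖g u - g x‖) * (y - x) = ∫ u in Icc x y, ‖g u - g x‖ := by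
        rw [setAverage_eq, measureReal_def, Real.volume_Icc, ENNReal.toReal_ofReal (by linarith), smul_eq_mul]
        field_simp
      linarith [hb]
    have := key.add_const (g x)
    simpa using this


/-- FTC-type inequality for absolutely continuous functions. -/
theorem lemmaA {f : ℝ → ℝ} {t : ℝ} (hf : AbsContOn f 0 T) (ht : 0 < t) (htT : t ≤ T)
    {g b : ℝ → ℝ}
    (hfd : ∀ᵐ x ∂(volume.restrict (Ioo 0 t)), HasDerivAt f (deriv f x) x)
    (hgi : IntegrableOn g (Ioo 0 t))
    (hbm : Measurable b) (hb0 : ∀ x, 0 ≤ b x) {M : ℝ} (hbM : ∀ x, b x ≤ M)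
    (hae : ∀ᵐ x ∂(volume.restrict (Ioo 0 t)), deriv f x + b x ≤ g x) :
    f t + ∫ x in Ioo (0:ℝ) t, b x ≤ f 0 + ∫ x in Ioo (0:ℝ) t, g x := by
  classical
  set gh : ℝ → ℝ := (Ioo (0:ℝ) t).indicator g with hgh
  set bh : ℝ → ℝ := (Ioo (0:ℝ) t).indicator b with hbh
  have hghInt : Integrable gh (volume : Measure ℝ) :=
    (integrable_indicator_iff measurableSet_Ioo).mpr hgi
  have hbInt : IntegrableOn b (Ioo (0:ℝ) t) := by
    apply Integrable.mono' (integrable_const M)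
    · exact (hbm.stronglyMeasurable.aestronglyMeasurable)
    · filter_upwards with x
      rw [Real.norm_eq_abs, abs_of_nonneg (hb0 x)]
      exact hbM x
  have hbhInt : Integrable bh (volume : Measure ℝ) :=
    (integrable_indicator_iff measurableSet_Ioo).mpr hbInt
  set Hg : ℝ → ℝ := fun y => ∫ u in Ioc (-1:ℝ) y, gh u with hHg
  set Hb : ℝ → ℝ := fun y => ∫ u in Ioc (-1:ℝ) y, bh u with hHb
  set φ : ℝ → ℝ := fun y => f y - Hg y + Hb y with hφdef
  have hφAC : AbsContOn φ 0 T := by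
    apply absContOn_of_dominated (s := ({0, 1, 2} : Finset ℕ))
      (F := fun i => if i = 0 then f else if i = 1 then Hg else Hb) (C := 1) one_pos
    · intro i hi
      fin_cases hi
      · simpa using hf
      · simpa using primitive_absContOn hghInt (T := T)
      · simpa using primitive_absContOn hbhInt (T := T)
    · intro u v _ _ _
      rw [one_mul]
      have hsum : ∑ i ∈ ({0, 1, 2} : Finset ℕ),
          |(if i = 0 then f else if i = 1 then Hg else Hb) v -
            (if i = 0 then f else if i = 1 then Hg else Hb) u|
          = |f v - f u| + |Hg v - Hg u| + |Hb v - Hb u| := by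
        rw [Finset.sum_insert (by decide), Finset.sum_insert (by decide),
          Finset.sum_singleton]
        norm_num
        ring
      rw [hsum]
      have h1 : φ v - φ u = ((f v - f u) + (-(Hg v - Hg u))) + (Hb v - Hb u) := by
        simp only [hφdef]; ring
      calc |φ v - φ u| ≤ |(f v - f u) + (-(Hg v - Hg u))| + |Hb v - Hb u| := by
            rw [h1]; exact abs_add_le _ _
        _ ≤ |f v - f u| + |Hg v - Hg u| + |Hb v - Hb u| := by
            have h2 := abs_add_le (f v - f u) (-(Hg v - Hg u))
            rw [abs_neg] at h2
            linarith
  have hcore : ∀ᵐ x ∂(volume.restrict (Ioo (0:ℝ) t)), ∃ d, d ≤ (0:ℝ) ∧ HasDerivAt φ d x := by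
    filter_upwards [hfd, hae, ae_restrict_of_ae (primitive_ae_hasDerivAt hghInt),
      ae_restrict_of_ae (primitive_ae_hasDerivAt hbhInt),
      ae_restrict_mem measurableSet_Ioo] with x h1 h2 h3 h4 hx
    refine ⟨deriv f x - gh x + bh x, ?_, ?_⟩
    · have e1 : gh x = g x := Set.indicator_of_mem hx g
      have e2 : bh x = b x := Set.indicator_of_mem hx b
      rw [e1, e2]
      linarith [h2, hb0 x]
    · exact (h1.sub (h3 hx.1)).add (h4 hx.1)
  have hmain := core_nonpos hφAC ht htT hcore
  have hHg0 : Hg 0 = 0 := by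
    rw [hHg]
    simp only []
    rw [setIntegral_indicator measurableSet_Ioo]
    have : Ioc (-1:ℝ) 0 ∩ Ioo 0 t = ∅ := by
      ext z
      simp only [Set.mem_inter_iff, Set.mem_Ioc, Set.mem_Ioo, Set.mem_empty_iff_false]
      constructor
      · rintro ⟨⟨_, h1⟩, h2, _⟩; linarith
      · exact False.elim
    rw [this, setIntegral_empty]
  have hHb0 : Hb 0 = 0 := by
    rw [hHb]
    simp only []
    rw [setIntegral_indicator measurableSet_Ioo]
    have : Ioc (-1:ℝ) 0 ∩ Ioo 0 t = ∅ := by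
      ext z
      simp only [Set.mem_inter_iff, Set.mem_Ioc, Set.mem_Ioo, Set.mem_empty_iff_false]
      constructor
      · rintro ⟨⟨_, h1⟩, h2, _⟩; linarith
      · exact False.elim
    rw [this, setIntegral_empty]
  have hinter : Ioc (-1:ℝ) t ∩ Ioo 0 t = Ioo 0 t := by
    apply Set.inter_eq_self_of_subset_right
    rintro z ⟨h1, h2⟩
    exact ⟨by linarith, h2.le⟩
  have hHgt : Hg t = ∫ x in Ioo (0:ℝ) t, g x := by
    rw [hHg]
    simp only []
    rw [setIntegral_indicator measurableSet_Ioo, hinter]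
  have hHbt : Hb t = ∫ x in Ioo (0:ℝ) t, b x := by
    rw [hHb]
    simp only []
    rw [setIntegral_indicator measurableSet_Ioo, hinter]
  have := hmain
  rw [hφdef] at this
  simp only [] at this
  rw [hHg0, hHb0, hHgt, hHbt] at this
  linarith


/-- Recursive Lyapunov vector function `G₀ = v₀`, `G_{k+1} = v_{k+1} + ζ G_k^(α+1)`. -/
def Gaux (α ζ : ℝ) (v : ℕ → ℝ) : ℕ → ℝ
  | 0 => v 0
  | k + 1 => v (k + 1) + ζ * Gaux α ζ v k ^ (α + 1)

def AEf (n : ℕ) (A : Fin n → ℝ → ℝ) : ℕ → ℝ → ℝ :=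
  fun j s => if h : j < n then A ⟨j, h⟩ s else Real.exp 1

def Gkf (n : ℕ) (α ζ : ℝ) (A : Fin n → ℝ → ℝ) : ℕ → ℝ → ℝ :=
  fun k s => Gaux α ζ (fun j => AEf n A j s) k

def Phif (n : ℕ) (α ζ : ℝ) (A : Fin n → ℝ → ℝ) : ℝ → ℝ :=
  fun s => ∑ k ∈ Finset.range n, Gkf n α ζ A k s

lemma Gkf_zero {n α ζ A} {s : ℝ} : Gkf n α ζ A 0 s = AEf n A 0 s := rfl

lemma Gkf_succ {n α ζ A} {k : ℕ} {s : ℝ} :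
    Gkf n α ζ A (k+1) s = AEf n A (k+1) s + ζ * Gkf n α ζ A k s ^ (α + 1) := rfl

lemma AEf_lt {n : ℕ} {A : Fin n → ℝ → ℝ} {j : ℕ} (h : j < n) {s : ℝ} :
    AEf n A j s = A ⟨j, h⟩ s := dif_pos h

variable {n : ℕ} {α ζ : ℝ} {A : Fin n → ℝ → ℝ}

lemma AEf_ge (hA : ∀ i t, Real.exp 1 ≤ A i t) (j : ℕ) (s : ℝ) :
    Real.exp 1 ≤ AEf n A j s := by
  unfold AEf
  split
  · exact hA _ _
  · exact le_refl _

lemma Gkf_ge (hζ : 0 ≤ ζ) (hA : ∀ i t, Real.exp 1 ≤ A i t) (k : ℕ) (s : ℝ) :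
    Real.exp 1 ≤ Gkf n α ζ A k s ∧ AEf n A k s ≤ Gkf n α ζ A k s := by
  induction k with
  | zero => exact ⟨AEf_ge hA 0 s, le_refl _⟩
  | succ k ih =>
    have h1 : 0 ≤ Gkf n α ζ A k s ^ (α + 1) :=
      Real.rpow_nonneg (le_trans (Real.exp_pos 1).le ih.1) _
    have h2 : AEf n A (k+1) s ≤ Gkf n α ζ A (k+1) s := by
      rw [Gkf_succ]
      nlinarith [mul_nonneg hζ h1]
    exact ⟨le_trans (AEf_ge hA (k+1) s) h2, h2⟩

lemma Gkf_pos (hζ : 0 ≤ ζ) (hA : ∀ i t, Real.exp 1 ≤ A i t) (k : ℕ) (s : ℝ) :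
    0 < Gkf n α ζ A k s :=
  lt_of_lt_of_le (Real.exp_pos 1) (Gkf_ge hζ hA k s).1

lemma sum_le_Phif (hζ : 0 ≤ ζ) (hA : ∀ i t, Real.exp 1 ≤ A i t) (s : ℝ) :
    (∑ i : Fin n, A i s) ≤ Phif n α ζ A s := by
  have h1 : (∑ i : Fin n, A i s) = ∑ k ∈ Finset.range n, AEf n A k s := by
    rw [← Fin.sum_univ_eq_sum_range (fun k => AEf n A k s) n]
    apply Finset.sum_congr rfl
    intro i _
    rw [AEf_lt i.isLt]
  rw [h1]
  exact Finset.sum_le_sum (fun k _ => (Gkf_ge hζ hA k s).2)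

lemma Phif_ge (hn : 0 < n) (hζ : 0 ≤ ζ) (hA : ∀ i t, Real.exp 1 ≤ A i t) (s : ℝ) :
    Real.exp 1 ≤ Phif n α ζ A s := by
  have h0 : (0:ℕ) ∈ Finset.range n := Finset.mem_range.mpr hn
  calc Real.exp 1 ≤ Gkf n α ζ A 0 s := (Gkf_ge hζ hA 0 s).1
    _ ≤ ∑ k ∈ Finset.range n, Gkf n α ζ A k s :=
      Finset.single_le_sum (fun k _ => (Gkf_pos hζ hA k s).le) h0
    _ = Phif n α ζ A s := rfl

lemma Phif_pos (hn : 0 < n) (hζ : 0 ≤ ζ) (hA : ∀ i t, Real.exp 1 ≤ A i t) (s : ℝ) :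
    0 < Phif n α ζ A s :=
  lt_of_lt_of_le (Real.exp_pos 1) (Phif_ge hn hζ hA s)

lemma one_le_log_Phif (hn : 0 < n) (hζ : 0 ≤ ζ) (hA : ∀ i t, Real.exp 1 ≤ A i t) (s : ℝ) :
    1 ≤ Real.log (Phif n α ζ A s) := by
  rw [Real.le_log_iff_exp_le (Phif_pos hn hζ hA s)]
  exact Phif_ge hn hζ hA s

/-- rpow is Lipschitz on bounded sets of nonnegative reals. -/
lemma rpow_lipschitz {p M : ℝ} (hp : 1 ≤ p) {x y : ℝ}
    (hx : x ∈ Icc (0:ℝ) M) (hy : y ∈ Icc (0:ℝ) M) :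
    |x ^ p - y ^ p| ≤ p * M ^ (p - 1) * |x - y| := by
  have hM : (0:ℝ) ≤ M := hx.1.trans hx.2
  have key := Convex.norm_image_sub_le_of_norm_hasDerivWithin_le
    (f := fun z : ℝ => z ^ p) (f' := fun z : ℝ => p * z ^ (p - 1))
    (s := Icc (0:ℝ) M) (C := p * M ^ (p - 1))
    (fun z _ => (Real.hasDerivAt_rpow_const (Or.inr hp)).hasDerivWithinAt)
    (fun z hz => by
      rw [Real.norm_eq_abs, abs_of_nonneg
        (mul_nonneg (by linarith) (Real.rpow_nonneg hz.1 _))]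
      exact mul_le_mul_of_nonneg_left
        (Real.rpow_le_rpow hz.1 hz.2 (by linarith)) (by linarith))
    (convex_Icc 0 M) hy hx
  simpa [Real.norm_eq_abs] using key

/-- log is 1-Lipschitz on `[1, M]`. -/
lemma log_lipschitz {M : ℝ} {x y : ℝ} (hx : x ∈ Icc (1:ℝ) M) (hy : y ∈ Icc (1:ℝ) M) :
    |Real.log x - Real.log y| ≤ |x - y| := by
  have key := Convex.norm_image_sub_le_of_norm_hasDerivWithin_le
    (f := Real.log) (f' := fun z : ℝ => z⁻¹)
    (s := Icc (1:ℝ) M) (C := 1)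
    (fun z hz => (Real.hasDerivAt_log (by linarith [hz.1])).hasDerivWithinAt)
    (fun z hz => by
      rw [Real.norm_eq_abs, abs_of_nonneg (inv_nonneg.mpr (by linarith [hz.1]))]
      rw [inv_le_one_iff₀]
      right; linarith [hz.1])
    (convex_Icc 1 M) hy hx
  simpa [Real.norm_eq_abs] using key


/-- Pointwise derivative bound for the Lyapunov function. -/
lemma phif_deriv_bound
    (hn : 0 < n) (hα : 1 ≤ α) (hζ : 1 ≤ ζ)
    {B : Fin n → ℝ → ℝ} {K : ℝ → ℝ} {x : ℝ}
    (hA : ∀ i t, Real.exp 1 ≤ A i t)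
    (hB0 : ∀ i t, 0 ≤ B i t)
    (hK0 : 0 ≤ K x)
    (hder : ∀ i : Fin n, HasDerivAt (A i) (deriv (A i) x) x)
    (hode : ∀ i : Fin n, deriv (A i) x + B i x
        ≤ K x * Real.log (∑ j, A j x) * A i x
          + if hi : (i : ℕ) = 0 then 0 else
              ζ * A ⟨(i : ℕ) - 1, Nat.lt_of_le_of_lt (Nat.sub_le _ _) i.isLt⟩ x ^ α
                * B ⟨(i : ℕ) - 1, Nat.lt_of_le_of_lt (Nat.sub_le _ _) i.isLt⟩ x) :
    ∃ D, HasDerivAt (Phif n α ζ A) D x ∧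
      D + (∑ i : Fin n, B i x) ≤
        (α+1)^n * K x * Real.log (Phif n α ζ A x) * Phif n α ζ A x := by
  classical
  have hζ0 : (0:ℝ) ≤ ζ := by linarith
  set L : ℝ := Real.log (∑ j, A j x) with hLdef
  have hSge : Real.exp 1 ≤ ∑ j, A j x := by
    calc Real.exp 1 ≤ A ⟨0, hn⟩ x := hA _ _
      _ ≤ ∑ j, A j x := Finset.single_le_sum
          (fun j _ => le_trans (Real.exp_pos 1).le (hA j x)) (Finset.mem_univ _)
  have hSpos : (0:ℝ) < ∑ j, A j x := lt_of_lt_of_le (Real.exp_pos 1) hSge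
  have hL1 : (1:ℝ) ≤ L := by
    rw [hLdef, Real.le_log_iff_exp_le hSpos]
    exact hSge
  set P : ℝ := K x * L with hPdef
  have hP : 0 ≤ P := mul_nonneg hK0 (by linarith)
  have claim : ∀ k, ∃ D, (k < n → HasDerivAt (fun s => Gkf n α ζ A k s) D x ∧
      D + (if h : k < n then B ⟨k, h⟩ x else 0) ≤ (α+1)^k * P * Gkf n α ζ A k x) := by
    intro k
    induction k with
    | zero =>
      refine ⟨deriv (A ⟨0, hn⟩) x, fun _ => ⟨?_, ?_⟩⟩
      · have hfe : (fun s => Gkf n α ζ A 0 s) = A ⟨0, hn⟩ := by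
          funext s; rw [Gkf_zero, AEf_lt hn]
        rw [hfe]
        exact hder _
      · rw [dif_pos hn, pow_zero, one_mul]
        have hG0 : Gkf n α ζ A 0 x = A ⟨0, hn⟩ x := by rw [Gkf_zero, AEf_lt hn]
        rw [hG0]
        have hodei := hode ⟨0, hn⟩
        rw [dif_pos rfl] at hodei
        linarith
    | succ k ih =>
      obtain ⟨D, hD⟩ := ih
      by_cases hk1 : k + 1 < n
      · have hk : k < n := Nat.lt_of_succ_lt hk1
        obtain ⟨hDer, hIneq⟩ := hD hk
        rw [dif_pos hk] at hIneq
        have hA1 : HasDerivAt (A ⟨k+1, hk1⟩) (deriv (A ⟨k+1, hk1⟩) x) x := hder ⟨k+1, hk1⟩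
        have hrg : HasDerivAt (fun s => Gkf n α ζ A k s ^ (α+1))
            (D * (α+1) * Gkf n α ζ A k x ^ α) x := by
          have h := hDer.rpow_const (p := α + 1) (Or.inr (by linarith))
          have he : α + 1 - 1 = α := by ring
          rwa [he] at h
        refine ⟨deriv (A ⟨k+1, hk1⟩) x + ζ * (D * (α+1) * Gkf n α ζ A k x ^ α),
          fun _ => ⟨?_, ?_⟩⟩
        · have hfe : (fun s => Gkf n α ζ A (k+1) s)
              = fun s => A ⟨k+1, hk1⟩ s + ζ * Gkf n α ζ A k s ^ (α+1) := by
            funext s; rw [Gkf_succ, AEf_lt hk1]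
          rw [hfe]
          exact hA1.add (hrg.const_mul ζ)
        · rw [dif_pos hk1]
          have hodei := hode ⟨k+1, hk1⟩
          rw [dif_neg (by exact Nat.succ_ne_zero k)] at hodei
          have hodei' : deriv (A ⟨k+1, hk1⟩) x + B ⟨k+1, hk1⟩ x
              ≤ P * A ⟨k+1, hk1⟩ x
                + ζ * A ⟨k, hk⟩ x ^ α * B ⟨k, hk⟩ x := hodei
          set a1 := A ⟨k+1, hk1⟩ x with ha1def
          set b1 := B ⟨k+1, hk1⟩ x with hb1def
          set a0 := A ⟨k, hk⟩ x with ha0def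
          set b0 := B ⟨k, hk⟩ x with hb0def
          set Gv := Gkf n α ζ A k x with hGvdef
          have hGv_pos : 0 < Gv := Gkf_pos hζ0 hA k x
          have ha0Gv : a0 ≤ Gv := by
            have h := (Gkf_ge (n := n) (α := α) (ζ := ζ) (A := A) hζ0 hA k x).2
            rwa [AEf_lt hk] at h
          have ha0 : 0 ≤ a0 := le_trans (Real.exp_pos 1).le (hA _ _)
          have hb0 : 0 ≤ b0 := hB0 ⟨k, hk⟩ x
          have hb1 : 0 ≤ b1 := hB0 ⟨k+1, hk1⟩ x
          have ha1 : 0 ≤ a1 := le_trans (Real.exp_pos 1).le (hA _ _)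
          have hGsucc : Gkf n α ζ A (k+1) x = a1 + ζ * Gv ^ (α+1) := by
            rw [Gkf_succ, AEf_lt hk1]
          rw [hGsucc]
          set ga := Gv ^ α with hgadef
          set ga1 := Gv ^ (α+1) with hga1def
          set a0a := a0 ^ α with ha0adef
          have hga : 0 ≤ ga := Real.rpow_nonneg hGv_pos.le α
          have hga1 : 0 ≤ ga1 := Real.rpow_nonneg hGv_pos.le _
          have ha0a : a0a ≤ ga := by
            rw [ha0adef, hgadef]
            exact Real.rpow_le_rpow ha0 ha0Gv (by linarith)
          have ha0a0 : 0 ≤ a0a := Real.rpow_nonneg ha0 _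
          have hgrow : ga * Gv = ga1 := by
            rw [hgadef, hga1def, Real.rpow_add_one hGv_pos.ne' α]
          set q := (α+1)^k with hqdef
          set q1 := (α+1)^(k+1) with hq1def
          have hq0 : (0:ℝ) ≤ q := by positivity
          have hqq1 : q1 = q * (α+1) := pow_succ _ _
          have hck1 : (1:ℝ) ≤ q1 := by
            rw [hq1def]
            calc (1:ℝ) = 1^(k+1) := (one_pow _).symm
              _ ≤ (α+1)^(k+1) := pow_le_pow_left₀ (by norm_num) (by linarith) _
          have hnn : 0 ≤ ζ * (α+1) * ga :=
            mul_nonneg (mul_nonneg hζ0 (by linarith)) hga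
          have hmul1 : ζ * (α+1) * ga * D ≤ ζ * (α+1) * ga * (q * P * Gv - b0) :=
            mul_le_mul_of_nonneg_left (by linarith) hnn
          have hexp : ζ * (α+1) * ga * (q * P * Gv - b0)
              = ζ * q1 * (P * (ga * Gv)) - ζ * (α+1) * ga * b0 := by
            rw [hqq1]; ring
          rw [hexp, hgrow] at hmul1
          have hcross : ζ * a0a * b0 ≤ ζ * (α+1) * ga * b0 := by
            apply mul_le_mul_of_nonneg_right _ hb0
            calc ζ * a0a ≤ ζ * ga := mul_le_mul_of_nonneg_left ha0a hζ0
              _ ≤ ζ * (α+1) * ga := by nlinarith [mul_nonneg hζ0 hga]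
          have hX2 : P * a1 ≤ q1 * (P * a1) :=
            le_mul_of_one_le_left (mul_nonneg hP ha1) hck1
          have hrhs : q1 * P * (a1 + ζ * ga1)
              = q1 * (P * a1) + ζ * q1 * (P * ga1) := by ring
          rw [hrhs]
          linarith [hmul1, hcross, hodei', hX2]
      · exact ⟨0, fun h => absurd h hk1⟩
  choose Df hDf using claim
  have hsum : HasDerivAt (Phif n α ζ A) (∑ k ∈ Finset.range n, Df k) x := by
    have h := HasDerivAt.fun_sum (u := Finset.range n)
      (A := fun k s => Gkf n α ζ A k s) (A' := fun k => Df k)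
      (fun k hk => (hDf k (Finset.mem_range.mp hk)).1)
    exact h
  refine ⟨_, hsum, ?_⟩
  have hBsum : (∑ i : Fin n, B i x)
      = ∑ k ∈ Finset.range n, (if h : k < n then B ⟨k, h⟩ x else 0) := by
    rw [← Fin.sum_univ_eq_sum_range (fun k => if h : k < n then B ⟨k, h⟩ x else 0) n]
    apply Finset.sum_congr rfl
    intro i _
    rw [dif_pos i.isLt]
  rw [hBsum, ← Finset.sum_add_distrib]
  have hstep1 : ∑ k ∈ Finset.range n, (Df k + if h : k < n then B ⟨k, h⟩ x else 0)
      ≤ ∑ k ∈ Finset.range n, (α+1)^k * P * Gkf n α ζ A k x :=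
    Finset.sum_le_sum (fun k hk => (hDf k (Finset.mem_range.mp hk)).2)
  have hstep2 : ∑ k ∈ Finset.range n, (α+1)^k * P * Gkf n α ζ A k x
      ≤ ∑ k ∈ Finset.range n, (α+1)^n * (P * Gkf n α ζ A k x) := by
    apply Finset.sum_le_sum
    intro k hk
    have h1 : (α+1)^k ≤ (α+1)^n :=
      pow_le_pow_right₀ (by linarith : (1:ℝ) ≤ α+1) (Finset.mem_range.mp hk).le
    have h2 : 0 ≤ P * Gkf n α ζ A k x := mul_nonneg hP (Gkf_pos hζ0 hA k x).le
    calc (α+1)^k * P * Gkf n α ζ A k x = (α+1)^k * (P * Gkf n α ζ A k x) := by ring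
      _ ≤ (α+1)^n * (P * Gkf n α ζ A k x) := mul_le_mul_of_nonneg_right h1 h2
  have hstep3 : ∑ k ∈ Finset.range n, (α+1)^n * (P * Gkf n α ζ A k x)
      = (α+1)^n * P * Phif n α ζ A x := by
    rw [← Finset.mul_sum, Phif, ← Finset.mul_sum]
    ring
  have hstep4 : (α+1)^n * P * Phif n α ζ A x
      ≤ (α+1)^n * K x * Real.log (Phif n α ζ A x) * Phif n α ζ A x := by
    have hLlog : L ≤ Real.log (Phif n α ζ A x) := by
      rw [hLdef]
      exact Real.log_le_log hSpos (sum_le_Phif hζ0 hA x)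
    have hΦpos' := (Phif_pos (α := α) (ζ := ζ) hn hζ0 hA x).le
    have hpow : (0:ℝ) ≤ (α+1)^n := by positivity
    have hkey : (α+1)^n * K x * Real.log (Phif n α ζ A x) * Phif n α ζ A x
        - (α+1)^n * P * Phif n α ζ A x
        = ((α+1)^n * K x * Phif n α ζ A x) * (Real.log (Phif n α ζ A x) - L) := by
      rw [hPdef]; ring
    nlinarith [mul_nonneg (mul_nonneg (mul_nonneg hpow hK0) hΦpos')
      (sub_nonneg.mpr hLlog)]
  linarith

end ACAux

open ACAux

/-- **Lemma (Cao–Li–Titi).** A logarithmic system version of the Gronwall inequality: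
if nonnegative absolutely continuous functions `A i ≥ e` and nonnegative `B i` satisfy
`A₁' + B₁ ≤ K (log ∑ A_j) A₁` and, for `i ≥ 2`,
`A_i' + B_i ≤ K (log ∑ A_j) A_i + ζ A_{i-1}^α B_{i-1}` a.e. on `(0,𝒯)`,
with `α, ζ ≥ 1` and `K ∈ L¹_loc([0,∞))`, then
`∑ A_i(t) + ∑ ∫₀^t B_i ≤ Q(t)` on `[0,𝒯)`, where the continuous function `Q` is
determined only by the initial values `A_i(0)` and by `K`. -/
theorem gronwall_logarithmic_system
    (n : ℕ) (hn : 0 < n) (α ζ : ℝ) (hα : 1 ≤ α) (hζ : 1 ≤ ζ)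
    (m : ℝ → ℝ) (hm : ∀ t, 0 ≤ m t) (K : ℝ → ℝ) (hK0 : ∀ t, 0 ≤ K t) (hKloc : LocallyIntegrableOn K (Ici 0))
    (a₀ : Fin n → ℝ) :
    ∃ Q : ℝ → ℝ, ContinuousOn Q (Ici 0) ∧
      ∀ 𝒯 > (0 : ℝ), ∀ A B : Fin n → ℝ → ℝ,
        (∀ i t, Real.exp 1 ≤ A i t) →
        (∀ i t, 0 ≤ B i t) →
        (∀ i, Measurable (B i)) →
        (∀ i, AbsContOn (A i) 0 𝒯) →
        (∀ i, A i 0 = a₀ i) →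
        (∀ᵐ t ∂(volume.restrict (Ioo (0 : ℝ) 𝒯)), ∀ i : Fin n,
          deriv (A i) t + B i t
            ≤ K t * Real.log (∑ j, A j t) * A i t
              + if hi : (i : ℕ) = 0 then 0 else
                  ζ * A ⟨(i : ℕ) - 1, Nat.lt_of_le_of_lt (Nat.sub_le _ _) i.isLt⟩ t ^ α
                    * B ⟨(i : ℕ) - 1, Nat.lt_of_le_of_lt (Nat.sub_le _ _) i.isLt⟩ t) →
        ∀ t ∈ Ico (0 : ℝ) 𝒯,
          (∑ i, A i t) + ∑ i, (∫ s in Ioo (0 : ℝ) t, B i s) ≤ Q t := by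
  classical
  have hζ0 : (0:ℝ) ≤ ζ := by linarith
  have hone_exp : (1:ℝ) ≤ Real.exp 1 := by linarith [Real.add_one_le_exp 1]
  set A0 : Fin n → ℝ → ℝ := fun i _ => a₀ i with hA0f
  set Φ0 : ℝ := Phif n α ζ A0 0 with hΦ0def
  set Φ0' : ℝ := max Φ0 (Real.exp 1) with hΦ0'def
  set C : ℝ := (α + 1)^n with hCdef
  have hC1 : (1:ℝ) ≤ C := by
    rw [hCdef]
    calc (1:ℝ) = 1^n := (one_pow n).symm
      _ ≤ (α+1)^n := pow_le_pow_left₀ (by norm_num) (by linarith) n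
  have hC0 : (0:ℝ) < C := lt_of_lt_of_le one_pos hC1
  set IK : ℝ → ℝ := fun t => ∫ s in Ioo (0:ℝ) t, K s with hIKdef
  set ψ0 : ℝ := Real.log (Real.log Φ0') with hψ0def
  set Lam : ℝ → ℝ := fun t => Real.exp (ψ0 + C * IK t) with hLamdef
  set R : ℝ → ℝ := fun t => Real.exp (Lam t) with hRdef
  set Q : ℝ → ℝ := fun t => R t + Φ0' + C * IK t * Lam t * R t with hQdef
  have hKint : ∀ b : ℝ, IntegrableOn K (Icc 0 b) := by
    intro b
    exact hKloc.integrableOn_compact_subset (fun x hx => hx.1) isCompact_Icc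
  have hIK0 : IK 0 = 0 := by
    rw [hIKdef]
    simp
  have hIKmono : ∀ s t : ℝ, 0 ≤ s → s ≤ t → IK s ≤ IK t := by
    intro s t hs hst
    rw [hIKdef]
    apply setIntegral_mono_set ((hKint t).mono_set Ioo_subset_Icc_self)
      (Filter.Eventually.of_forall (fun x => hK0 x))
      (HasSubset.Subset.eventuallyLE (Ioo_subset_Ioo_right hst))
  have hIKnn : ∀ t, 0 ≤ t → 0 ≤ IK t := by
    intro t ht
    rw [← hIK0]
    exact hIKmono 0 t le_rfl ht
  have hIKcont : ContinuousOn IK (Ici 0) := by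
    intro x hx
    have hx0 : (0:ℝ) ≤ x := hx
    have hcont := intervalIntegral.continuousOn_primitive (f := K) (a := 0) (b := x+1)
      (μ := volume) (hKint (x+1))
    have h2 : ContinuousWithinAt IK (Icc 0 (x+1)) x := by
      apply (hcont x ⟨hx0, by linarith⟩).congr
      · intro y _
        rw [hIKdef]
        exact integral_Ioc_eq_integral_Ioo.symm
      · rw [hIKdef]
        exact integral_Ioc_eq_integral_Ioo.symm
    apply h2.mono_of_mem_nhdsWithin
    have : Icc (0:ℝ) (x+1) = Ici 0 ∩ Iic (x+1) := (Ici_inter_Iic).symm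
    rw [this]
    exact inter_mem_nhdsWithin _ (Iic_mem_nhds (by linarith))
  have hQcont : ContinuousOn Q (Ici 0) := by
    have h1 : ContinuousOn Lam (Ici 0) := by
      rw [hLamdef]
      exact Real.continuous_exp.comp_continuousOn
        (continuousOn_const.add (continuousOn_const.mul hIKcont))
    have h2 : ContinuousOn R (Ici 0) := by
      rw [hRdef]
      exact Real.continuous_exp.comp_continuousOn h1
    rw [hQdef]
    exact (h2.add continuousOn_const).add
      (((continuousOn_const.mul hIKcont).mul h1).mul h2)
  refine ⟨Q, hQcont, ?_⟩
  intro 𝒯 h𝒯 A B hAe hB0 hBm hAac hA0 hode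
  have hgood : ∀ i t, Real.exp 1 ≤ A0 i t := by
    intro i t
    show Real.exp 1 ≤ a₀ i
    rw [← hA0 i]
    exact hAe i 0
  have hΦ0ge : Real.exp 1 ≤ Φ0 := Phif_ge hn hζ0 hgood 0
  have hΦ0'eq : Φ0' = Φ0 := max_eq_left hΦ0ge
  set Φ : ℝ → ℝ := Phif n α ζ A with hΦdef
  set ψ : ℝ → ℝ := fun s => Real.log (Real.log (Φ s)) with hψdef
  have hΦge : ∀ s, Real.exp 1 ≤ Φ s := Phif_ge hn hζ0 hAe
  have hΦpos : ∀ s, 0 < Φ s := Phif_pos hn hζ0 hAe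
  have hlogΦ : ∀ s, 1 ≤ Real.log (Φ s) := one_le_log_Phif hn hζ0 hAe
  have hΦ00 : Φ 0 = Φ0 := by
    rw [hΦdef, hΦ0def]
    unfold Phif Gkf
    apply Finset.sum_congr rfl
    intro k _
    congr 1
    funext j
    unfold AEf
    split
    · exact hA0 _
    · rfl
  -- continuity
  have hAEc : ∀ j, ContinuousOn (fun s => AEf n A j s) (Icc 0 𝒯) := by
    intro j
    by_cases hj : j < n
    · have he : (fun s => AEf n A j s) = A ⟨j, hj⟩ := funext fun s => AEf_lt hj
      rw [he]
      exact continuousOn_of_absContOn (hAac _)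
    · have he : (fun s => AEf n A j s) = fun _ => Real.exp 1 := funext fun s => dif_neg hj
      rw [he]
      exact continuousOn_const
  have hGc : ∀ k, ContinuousOn (fun s => Gkf n α ζ A k s) (Icc 0 𝒯) := by
    intro k
    induction k with
    | zero => exact hAEc 0
    | succ k ih =>
      have he : (fun s => Gkf n α ζ A (k+1) s)
          = fun s => AEf n A (k+1) s + ζ * (Gkf n α ζ A k s) ^ (α+1) := rfl
      rw [he]
      exact (hAEc (k+1)).add (continuousOn_const.mul
        (ih.rpow_const (fun s _ => Or.inl (Gkf_pos hζ0 hAe k s).ne')))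
  have hΦcont : ContinuousOn Φ (Icc 0 𝒯) := by
    rw [hΦdef]
    unfold Phif
    exact continuousOn_finset_sum _ (fun k _ => hGc k)
  -- absolute continuity
  have hAEac : ∀ j, AbsContOn (fun s => AEf n A j s) 0 𝒯 := by
    intro j
    by_cases hj : j < n
    · have he : (fun s => AEf n A j s) = A ⟨j, hj⟩ := funext fun s => AEf_lt hj
      rw [he]
      exact hAac _
    · have he : (fun s => AEf n A j s) = fun _ => Real.exp 1 := funext fun s => dif_neg hj
      rw [he]
      exact absContOn_const
  have hGac : ∀ k, AbsContOn (fun s => Gkf n α ζ A k s) 0 𝒯 := by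
    intro k
    induction k with
    | zero => exact hAEac 0
    | succ k ih =>
      obtain ⟨M, hM⟩ := isCompact_Icc.exists_bound_of_continuousOn (hGc k)
      set M' := max M 1 with hM'def
      have hM'1 : (1:ℝ) ≤ M' := le_max_right _ _
      have hGmem : ∀ s ∈ Icc (0:ℝ) 𝒯, Gkf n α ζ A k s ∈ Icc (0:ℝ) M' := by
        intro s hs
        refine ⟨(Gkf_pos hζ0 hAe k s).le, ?_⟩
        calc Gkf n α ζ A k s ≤ |Gkf n α ζ A k s| := le_abs_self _
          _ ≤ M := by have h := hM s hs; rwa [Real.norm_eq_abs] at h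
          _ ≤ M' := le_max_left _ _
      have hcoef : (0:ℝ) ≤ ζ * ((α+1) * M' ^ α) :=
        mul_nonneg hζ0 (mul_nonneg (by linarith) (Real.rpow_nonneg (by linarith) α))
      apply absContOn_of_dominated (s := ({0, 1} : Finset ℕ))
        (F := fun i => if i = 0 then (fun s => AEf n A (k+1) s) else (fun s => Gkf n α ζ A k s))
        (C := 1 + ζ * ((α+1) * M' ^ α)) (by linarith)
      · intro i hi
        fin_cases hi
        · simpa using hAEac (k+1)
        · simpa using ih
      · intro u v hu hv huv
        rw [Finset.sum_insert (by decide), Finset.sum_singleton]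
        norm_num
        have hrp := rpow_lipschitz (p := α+1) (M := M') (by linarith)
          (hGmem v hv) (hGmem u hu)
        have hα1 : α + 1 - 1 = α := by ring
        rw [hα1] at hrp
        set X := |AEf n A (k+1) v - AEf n A (k+1) u| with hX
        set Y := |Gkf n α ζ A k v - Gkf n α ζ A k u| with hY
        have hXnn : 0 ≤ X := abs_nonneg _
        have hYnn : 0 ≤ Y := abs_nonneg _
        have he : ∀ w, Gkf n α ζ A (k+1) w
            = AEf n A (k+1) w + ζ * (Gkf n α ζ A k w)^(α+1) := fun w => rfl
        rw [he u, he v]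
        have h1 : AEf n A (k+1) v + ζ * Gkf n α ζ A k v^(α+1)
            - (AEf n A (k+1) u + ζ * Gkf n α ζ A k u^(α+1))
            = (AEf n A (k+1) v - AEf n A (k+1) u)
              + ζ * (Gkf n α ζ A k v^(α+1) - Gkf n α ζ A k u^(α+1)) := by ring
        rw [h1]
        calc |(AEf n A (k+1) v - AEf n A (k+1) u)
              + ζ * (Gkf n α ζ A k v^(α+1) - Gkf n α ζ A k u^(α+1))|
            ≤ X + ζ * |Gkf n α ζ A k v^(α+1) - Gkf n α ζ A k u^(α+1)| := by
              refine (abs_add_le _ _).trans ?_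
              rw [abs_mul, abs_of_nonneg hζ0]
          _ ≤ X + ζ * ((α+1) * M'^α * Y) := by
              have h2 := mul_le_mul_of_nonneg_left hrp hζ0
              linarith
          _ ≤ (1 + ζ * ((α+1) * M'^α)) * (X + Y) := by nlinarith
  have hΦac : AbsContOn Φ 0 𝒯 := by
    apply absContOn_of_dominated (s := Finset.range n)
      (F := fun k => fun s => Gkf n α ζ A k s) (C := 1) one_pos
      (fun k _ => hGac k)
    intro u v hu hv huv
    rw [one_mul]
    have h1 : Φ v - Φ u = ∑ k ∈ Finset.range n, (Gkf n α ζ A k v - Gkf n α ζ A k u) := by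
      rw [hΦdef]
      unfold Phif
      rw [Finset.sum_sub_distrib]
    rw [h1]
    exact Finset.abs_sum_le_sum_abs _ _
  have hψac : AbsContOn ψ 0 𝒯 := by
    obtain ⟨MP, hMP⟩ := isCompact_Icc.exists_bound_of_continuousOn hΦcont
    set MP' := max MP (Real.exp 1) with hMP'def
    have hΦmem : ∀ s ∈ Icc (0:ℝ) 𝒯, Φ s ∈ Icc (1:ℝ) MP' := by
      intro s hs
      refine ⟨le_trans hone_exp (hΦge s), ?_⟩
      calc Φ s ≤ |Φ s| := le_abs_self _
        _ ≤ MP := by have h := hMP s hs; rwa [Real.norm_eq_abs] at h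
        _ ≤ MP' := le_max_left _ _
    have hlogmem : ∀ s ∈ Icc (0:ℝ) 𝒯, Real.log (Φ s) ∈ Icc (1:ℝ) MP' := by
      intro s hs
      refine ⟨hlogΦ s, ?_⟩
      calc Real.log (Φ s) ≤ Φ s - 1 := Real.log_le_sub_one_of_pos (hΦpos s)
        _ ≤ MP' := by linarith [(hΦmem s hs).2]
    apply absContOn_of_dominated (s := ({0} : Finset ℕ))
      (F := fun _ => Φ) (C := 1) one_pos (fun _ _ => hΦac)
    intro u v hu hv huv
    rw [Finset.sum_singleton, one_mul]
    calc |ψ v - ψ u| ≤ |Real.log (Φ v) - Real.log (Φ u)| := by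
          rw [hψdef]
          exact log_lipschitz (hlogmem v hv) (hlogmem u hu)
      _ ≤ |Φ v - Φ u| := log_lipschitz (hΦmem v hv) (hΦmem u hu)
  -- derivative information
  have hkey : ∀ᵐ x ∂(volume.restrict (Ioo (0:ℝ) 𝒯)),
      HasDerivAt Φ (deriv Φ x) x ∧
      deriv Φ x + (∑ i : Fin n, B i x) ≤ C * K x * Real.log (Φ x) * Φ x := by
    have hDerAll : ∀ᵐ x ∂(volume.restrict (Ioo (0:ℝ) 𝒯)),
        ∀ i : Fin n, HasDerivAt (A i) (deriv (A i) x) x :=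
      ae_all_iff.mpr (fun i => ae_hasDerivAt_of_absContOn h𝒯 (hAac i))
    filter_upwards [hDerAll, hode] with x hx hodex
    obtain ⟨D, hD1, hD2⟩ := phif_deriv_bound hn hα hζ hAe hB0 (hK0 x) hx hodex
    have hDe : deriv Φ x = D := by rw [hΦdef]; exact hD1.deriv
    constructor
    · rw [hΦdef] at hDe ⊢
      rw [hDe]
      exact hD1
    · rw [hDe, hΦdef, hCdef]
      exact hD2
  -- ψ bound
  have hψle : ∀ s, 0 < s → s < 𝒯 → ψ s ≤ ψ0 + C * IK s := by
    intro s hs hs𝒯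
    have hkey' := ae_restrict_of_ae_restrict_of_subset (Ioo_subset_Ioo_right hs𝒯.le) hkey
    have hψder : ∀ᵐ x ∂(volume.restrict (Ioo (0:ℝ) s)),
        HasDerivAt ψ (deriv ψ x) x ∧ deriv ψ x + 0 ≤ C * K x := by
      filter_upwards [hkey'] with x hx
      obtain ⟨hΦder, hΦbd⟩ := hx
      have h1 : HasDerivAt (fun w => Real.log (Φ w)) (deriv Φ x / Φ x) x :=
        hΦder.log (hΦpos x).ne'
      have h2 : HasDerivAt ψ (deriv Φ x / Φ x / Real.log (Φ x)) x := by
        rw [hψdef]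
        exact h1.log (by linarith [hlogΦ x])
      have hlogpos : (0:ℝ) < Real.log (Φ x) := by linarith [hlogΦ x]
      have hBnn : (0:ℝ) ≤ ∑ i : Fin n, B i x :=
        Finset.sum_nonneg (fun i _ => hB0 i x)
      have hq1 : deriv Φ x / Φ x ≤ C * K x * Real.log (Φ x) := by
        rw [div_le_iff₀ (hΦpos x)]
        linarith
      have hq2 : deriv Φ x / Φ x / Real.log (Φ x) ≤ C * K x := by
        rw [div_le_iff₀ hlogpos]
        calc deriv Φ x / Φ x ≤ C * K x * Real.log (Φ x) := hq1
          _ = C * K x * Real.log (Φ x) := rfl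
      refine ⟨?_, ?_⟩
      · rw [h2.deriv]; exact h2
      · rw [h2.deriv, add_zero]; exact hq2
    have happ := lemmaA (T := 𝒯) hψac hs hs𝒯.le
      (g := fun x => C * K x) (b := fun _ => (0:ℝ))
      (by filter_upwards [hψder] with x hx; exact hx.1)
      (((hKint 𝒯).mono_set (fun x hx => ⟨hx.1.le, hx.2.le.trans hs𝒯.le⟩)).const_mul C)
      measurable_const (fun _ => le_rfl) (M := 0) (fun _ => le_rfl)
      (by filter_upwards [hψder] with x hx; simpa using hx.2)
    rw [integral_zero, add_zero] at happ
    have hCK : ∫ x in Ioo (0:ℝ) s, C * K x = C * IK s := by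
      rw [hIKdef]
      exact integral_const_mul C K
    rw [hCK] at happ
    have hψ00 : ψ 0 = ψ0 := by
      show Real.log (Real.log (Φ 0)) = ψ0
      rw [hΦ00, hψ0def, hΦ0'eq]
    rw [hψ00] at happ
    exact happ
  -- pointwise bound on Φ
  have hΦleR : ∀ s, 0 ≤ s → s < 𝒯 → Φ s ≤ R s := by
    intro s hs hs𝒯
    have hΦexp : Φ s = Real.exp (Real.exp (ψ s)) := by
      rw [hψdef]
      rw [Real.exp_log (by linarith [hlogΦ s] : (0:ℝ) < Real.log (Φ s))]
      rw [Real.exp_log (hΦpos s)]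
    rcases eq_or_lt_of_le hs with rfl | hs0
    · have hψ00 : ψ 0 = ψ0 := by
        show Real.log (Real.log (Φ 0)) = ψ0
        rw [hΦ00, hψ0def, hΦ0'eq]
      rw [hΦexp, hψ00]
      show Real.exp (Real.exp ψ0) ≤ R 0
      have hR0 : R 0 = Real.exp (Real.exp (ψ0 + C * IK 0)) := rfl
      rw [hR0, hIK0, mul_zero, add_zero]
    · have h1 := hψle s hs0 hs𝒯
      rw [hΦexp, hRdef, hLamdef]
      exact Real.exp_le_exp.mpr (Real.exp_le_exp.mpr h1)
  intro t htm
  obtain ⟨ht0, ht𝒯⟩ := htm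
  rcases eq_or_lt_of_le ht0 with rfl | ht0'
  · -- t = 0
    have hsum0 : (∑ i : Fin n, ∫ s in Ioo (0:ℝ) 0, B i s) = 0 := by
      apply Finset.sum_eq_zero
      intro i _
      rw [Set.Ioo_self]
      exact setIntegral_empty
    rw [hsum0, add_zero]
    have h1 : (∑ i, A i 0) ≤ Φ 0 := sum_le_Phif hζ0 hAe 0
    have hQ0 : Q 0 = R 0 + Φ0' + C * IK 0 * Lam 0 * R 0 := rfl
    have hR0pos : 0 < R 0 := Real.exp_pos _
    rw [hQ0, hΦ0'eq, hIK0]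
    have hzz : C * 0 * Lam 0 * R 0 = 0 := by ring
    rw [hzz]
    rw [hΦ00] at h1
    linarith
  · -- t > 0
    have hsub𝒯 : Ioo (0:ℝ) t ⊆ Icc 0 𝒯 := fun x hx => ⟨hx.1.le, (hx.2.trans ht𝒯).le⟩
    set gphi : ℝ → ℝ := fun x => C * K x * Real.log (Φ x) * Φ x with hgphidef
    have hΛpos : ∀ x, 0 < Lam x := fun x => Real.exp_pos _
    have hRpos : ∀ x, 0 < R x := fun x => Real.exp_pos _
    have hptbd : ∀ x ∈ Ioo (0:ℝ) t, gphi x ≤ C * Lam t * R t * K x := by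
      intro x hx
      have hx𝒯 : x < 𝒯 := hx.2.trans ht𝒯
      have hΦR : Φ x ≤ R t := by
        calc Φ x ≤ R x := hΦleR x hx.1.le hx𝒯
          _ ≤ R t := by
            rw [hRdef, hLamdef]
            apply Real.exp_le_exp.mpr
            apply Real.exp_le_exp.mpr
            have h := mul_le_mul_of_nonneg_left (hIKmono x t hx.1.le hx.2.le) hC0.le
            linarith
      have hlogb : Real.log (Φ x) ≤ Lam t := by
        calc Real.log (Φ x) ≤ Real.log (R t) := Real.log_le_log (hΦpos x) hΦR
          _ = Lam t := by rw [hRdef]; exact Real.log_exp _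
      have h1 : 0 ≤ C * K x := mul_nonneg hC0.le (hK0 x)
      show C * K x * Real.log (Φ x) * Φ x ≤ C * Lam t * R t * K x
      calc C * K x * Real.log (Φ x) * Φ x ≤ C * K x * Lam t * Φ x := by
            have h2 := mul_le_mul_of_nonneg_left hlogb h1
            exact mul_le_mul_of_nonneg_right h2 (hΦpos x).le
        _ ≤ C * K x * Lam t * R t :=
            mul_le_mul_of_nonneg_left hΦR (mul_nonneg h1 (hΛpos t).le)
        _ = C * Lam t * R t * K x := by ring
    have hKt : IntegrableOn K (Ioo (0:ℝ) t) := (hKint t).mono_set Ioo_subset_Icc_self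
    have hdomint : IntegrableOn (fun x => C * Lam t * R t * K x) (Ioo (0:ℝ) t) :=
      hKt.const_mul _
    have hgphinn : ∀ x, 0 ≤ gphi x := by
      intro x
      show 0 ≤ C * K x * Real.log (Φ x) * Φ x
      have := hlogΦ x
      have := hK0 x
      have := (hΦpos x).le
      positivity
    have hgphimeas : AEStronglyMeasurable gphi (volume.restrict (Ioo (0:ℝ) t)) := by
      have h1 : AEStronglyMeasurable K (volume.restrict (Ioo (0:ℝ) t)) :=
        hKt.aestronglyMeasurable
      have h2 : ContinuousOn (fun x => Real.log (Φ x) * Φ x) (Ioo (0:ℝ) t) := by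
        apply ContinuousOn.mul
        · exact (hΦcont.mono hsub𝒯).log (fun x _ => (hΦpos x).ne')
        · exact hΦcont.mono hsub𝒯
      have h2' : AEStronglyMeasurable (fun x => Real.log (Φ x) * Φ x)
          (volume.restrict (Ioo (0:ℝ) t)) := h2.aestronglyMeasurable measurableSet_Ioo
      have he : gphi = fun x => (C * K x) * (Real.log (Φ x) * Φ x) := by
        funext x
        show C * K x * Real.log (Φ x) * Φ x = (C * K x) * (Real.log (Φ x) * Φ x)
        ring
      rw [he]
      exact (aestronglyMeasurable_const.mul h1).mul h2'
    have hgphiint : IntegrableOn gphi (Ioo (0:ℝ) t) := by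
      apply Integrable.mono' hdomint hgphimeas
      filter_upwards [ae_restrict_mem measurableSet_Ioo] with x hx
      rw [Real.norm_eq_abs, abs_of_nonneg (hgphinn x)]
      exact hptbd x hx
    have hgphile : ∫ x in Ioo (0:ℝ) t, gphi x ≤ C * IK t * Lam t * R t := by
      calc ∫ x in Ioo (0:ℝ) t, gphi x
          ≤ ∫ x in Ioo (0:ℝ) t, C * Lam t * R t * K x := by
            apply integral_mono_ae hgphiint hdomint
            filter_upwards [ae_restrict_mem measurableSet_Ioo] with x hx
            exact hptbd x hx
        _ = C * Lam t * R t * IK t := by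
            rw [hIKdef]
            exact integral_const_mul _ K
        _ = C * IK t * Lam t * R t := by ring
    have hminint : ∀ (i : Fin n) (Mn : ℕ),
        IntegrableOn (fun x => min (B i x) (Mn:ℝ)) (Ioo (0:ℝ) t) := by
      intro i Mn
      apply Integrable.mono' (integrable_const (Mn:ℝ))
      · exact ((hBm i).min measurable_const).aestronglyMeasurable
      · filter_upwards with x
        rw [Real.norm_eq_abs, abs_of_nonneg (le_min (hB0 i x) (Nat.cast_nonneg Mn))]
        exact min_le_right _ _
    have hBMle : ∀ Mn : ℕ,
        (∑ i : Fin n, ∫ x in Ioo (0:ℝ) t, min (B i x) (Mn:ℝ))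
          ≤ Φ0 + C * IK t * Lam t * R t - Φ t := by
      intro Mn
      set bM : ℝ → ℝ := fun x => ∑ i : Fin n, min (B i x) (Mn:ℝ) with hbMdef
      have hbMmeas : Measurable bM :=
        Finset.measurable_sum _ (fun i _ => (hBm i).min measurable_const)
      have hbM0 : ∀ x, 0 ≤ bM x := fun x =>
        Finset.sum_nonneg (fun i _ => le_min (hB0 i x) (Nat.cast_nonneg Mn))
      have hbMM : ∀ x, bM x ≤ (n:ℝ) * Mn := by
        intro x
        calc bM x ≤ ∑ _i : Fin n, (Mn:ℝ) :=
              Finset.sum_le_sum (fun i _ => min_le_right _ _)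
          _ = (n:ℝ) * Mn := by
              rw [Finset.sum_const, Finset.card_univ, Fintype.card_fin, nsmul_eq_mul]
      have hkey' := ae_restrict_of_ae_restrict_of_subset (Ioo_subset_Ioo_right ht𝒯.le) hkey
      have happ := lemmaA (T := 𝒯) hΦac ht0' ht𝒯.le (g := gphi) (b := bM)
        (by filter_upwards [hkey'] with x hx; exact hx.1)
        hgphiint hbMmeas hbM0 (M := (n:ℝ) * Mn) hbMM
        (by
          filter_upwards [hkey'] with x hx
          have h1 : bM x ≤ ∑ i : Fin n, B i x :=
            Finset.sum_le_sum (fun i _ => min_le_left _ _)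
          have h2 := hx.2
          show deriv Φ x + bM x ≤ C * K x * Real.log (Φ x) * Φ x
          linarith)
      have hintb : ∫ x in Ioo (0:ℝ) t, bM x
          = ∑ i : Fin n, ∫ x in Ioo (0:ℝ) t, min (B i x) (Mn:ℝ) := by
        rw [hbMdef]
        exact integral_finset_sum _ (fun i _ => hminint i Mn)
      rw [hintb, hΦ00] at happ
      linarith [hgphile, happ]
    set Bd : ℝ := Φ0 + C * IK t * Lam t * R t - Φ t with hBddef
    have hBint : ∀ i : Fin n, IntegrableOn (B i) (Ioo (0:ℝ) t) := by
      intro i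
      have hone : ∀ Mn : ℕ, ∫ x in Ioo (0:ℝ) t, min (B i x) (Mn:ℝ) ≤ Bd := by
        intro Mn
        have h1 := hBMle Mn
        have h2 : ∀ j ∈ (Finset.univ : Finset (Fin n)),
            0 ≤ ∫ x in Ioo (0:ℝ) t, min (B j x) (Mn:ℝ) :=
          fun j _ => integral_nonneg (fun x => le_min (hB0 j x) (Nat.cast_nonneg Mn))
        calc ∫ x in Ioo (0:ℝ) t, min (B i x) (Mn:ℝ)
            ≤ ∑ j : Fin n, ∫ x in Ioo (0:ℝ) t, min (B j x) (Mn:ℝ) :=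
              Finset.single_le_sum h2 (Finset.mem_univ i)
          _ ≤ Bd := h1
      have hsupeq : ∀ x, (⨆ Mn : ℕ, ENNReal.ofReal (min (B i x) (Mn:ℝ)))
          = ENNReal.ofReal (B i x) := by
        intro x
        apply le_antisymm
        · exact iSup_le (fun Mn => ENNReal.ofReal_le_ofReal (min_le_left _ _))
        · have h3 : ENNReal.ofReal (B i x)
              = ENNReal.ofReal (min (B i x) ((⌈B i x⌉₊ : ℕ):ℝ)) := by
            rw [min_eq_left (Nat.le_ceil _)]
          rw [h3]
          exact le_iSup (fun Mn : ℕ => ENNReal.ofReal (min (B i x) (Mn:ℝ))) ⌈B i x⌉₊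
      have hlint : ∫⁻ x in Ioo (0:ℝ) t, ENNReal.ofReal (B i x) ≤ ENNReal.ofReal Bd := by
        have hmeas : ∀ Mn : ℕ, Measurable (fun x => ENNReal.ofReal (min (B i x) (Mn:ℝ))) :=
          fun Mn => ((hBm i).min measurable_const).ennreal_ofReal
        have hmono : Monotone (fun (Mn : ℕ) (x : ℝ) => ENNReal.ofReal (min (B i x) (Mn:ℝ))) := by
          intro M1 M2 h12 x
          exact ENNReal.ofReal_le_ofReal (min_le_min le_rfl (Nat.cast_le.mpr h12))
        calc ∫⁻ x in Ioo (0:ℝ) t, ENNReal.ofReal (B i x)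
            = ∫⁻ x in Ioo (0:ℝ) t, ⨆ Mn : ℕ, ENNReal.ofReal (min (B i x) (Mn:ℝ)) := by
              apply lintegral_congr
              intro x
              exact (hsupeq x).symm
          _ = ⨆ Mn : ℕ, ∫⁻ x in Ioo (0:ℝ) t, ENNReal.ofReal (min (B i x) (Mn:ℝ)) :=
              lintegral_iSup hmeas hmono
          _ ≤ ENNReal.ofReal Bd := by
              apply iSup_le
              intro Mn
              rw [← ofReal_integral_eq_lintegral_ofReal (hminint i Mn)
                (Filter.Eventually.of_forall (fun x => le_min (hB0 i x) (Nat.cast_nonneg Mn)))]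
              exact ENNReal.ofReal_le_ofReal (hone Mn)
      constructor
      · exact (hBm i).aestronglyMeasurable
      · rw [hasFiniteIntegral_iff_ofReal (Filter.Eventually.of_forall (fun x => hB0 i x))]
        exact lt_of_le_of_lt hlint ENNReal.ofReal_lt_top
    have htend : ∀ i : Fin n,
        Tendsto (fun Mn : ℕ => ∫ x in Ioo (0:ℝ) t, min (B i x) (Mn:ℝ)) atTop
          (𝓝 (∫ x in Ioo (0:ℝ) t, B i x)) := by
      intro i
      apply integral_tendsto_of_tendsto_of_monotone (fun Mn => hminint i Mn) (hBint i)
      · filter_upwards with x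
        intro M1 M2 h12
        exact min_le_min le_rfl (Nat.cast_le.mpr h12)
      · filter_upwards with x
        apply tendsto_atTop_of_eventually_const (i₀ := ⌈B i x⌉₊)
        intro Mn hMn
        rw [min_eq_left ((Nat.le_ceil _).trans (Nat.cast_le.mpr hMn))]
    have hsumtend : Tendsto (fun Mn : ℕ => ∑ i : Fin n, ∫ x in Ioo (0:ℝ) t, min (B i x) (Mn:ℝ))
        atTop (𝓝 (∑ i : Fin n, ∫ x in Ioo (0:ℝ) t, B i x)) :=
      tendsto_finset_sum _ (fun i _ => htend i)
    have hfinal : (∑ i : Fin n, ∫ x in Ioo (0:ℝ) t, B i x) ≤ Bd :=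
      le_of_tendsto hsumtend (Filter.Eventually.of_forall hBMle)
    have hAΦ : (∑ i, A i t) ≤ Φ t := sum_le_Phif hζ0 hAe t
    have hQt : Q t = R t + Φ0' + C * IK t * Lam t * R t := rfl
    rw [hQt, hΦ0'eq]
    rw [hBddef] at hfinal
    linarith [hRpos t]

end
end

section
/- Let 𝒯 > 0 and let m₁, m₂, S : (0,𝒯) → [0,∞) satisfy m₁, S ∈ L¹((0,𝒯)), m₂ ∈ L²((0,𝒯)), and S > 0 a.e. on (0,𝒯). Let f, G : (0,𝒯) → [0,∞), with f absolutely continuous on [0,𝒯), f(0) = 0, and suppose that f′(t) + G(t) ≤ m₁(t)f(t) + m₂(t)[f(t)G(t) log⁺(S(t)/G(t))]^{1/2} for a.e. t ∈ (0,𝒯), where log⁺z = max{0, log z}, and where, at times t with G(t) = 0, the quantity G(t)log⁺(S(t)/G(t)) is interpreted as lim_{z→0⁺} z log⁺(S(t)/z) = 0. Then f ≡ 0 on [0,𝒯). -/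
noncomputable section
open MeasureTheory Real Set Filter Metric Topology

namespace LiTitiAux

/-- The Osgood modulus `w(y) = y(1 + log⁺(1/y))`. -/
noncomputable def wfun (y : ℝ) : ℝ := y * (1 + max 0 (Real.log (1 / y)))

lemma wfun_zero : wfun 0 = 0 := by simp [wfun]

lemma wfun_nonneg {y : ℝ} (hy : 0 ≤ y) : 0 ≤ wfun y :=
  mul_nonneg hy (by positivity)

lemma self_le_wfun {y : ℝ} (hy : 0 ≤ y) : y ≤ wfun y := by
  have : (1:ℝ) ≤ 1 + max 0 (Real.log (1 / y)) := by
    have := le_max_left (0:ℝ) (Real.log (1 / y)); linarith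
  calc y = y * 1 := (mul_one y).symm
  _ ≤ _ := by
    apply mul_le_mul_of_nonneg_left this hy

lemma wfun_eq_self_of_one_le {y : ℝ} (hy : 1 ≤ y) : wfun y = y := by
  have h1 : Real.log (1 / y) ≤ 0 := by
    rw [one_div]
    rw [Real.log_inv]
    have : 0 ≤ Real.log y := Real.log_nonneg hy
    linarith
  rw [wfun, max_eq_left h1]; ring

lemma wfun_mono_aux {a b : ℝ} (ha : 0 < a) (hab : a ≤ b) (hb : b ≤ 1) :
    wfun a ≤ wfun b := by
  have hb0 : 0 < b := lt_of_lt_of_le ha hab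
  have hla : max 0 (Real.log (1 / a)) = Real.log (1 / a) := by
    apply max_eq_right
    apply Real.log_nonneg
    rw [le_div_iff₀ ha]; nlinarith
  have hlb : max 0 (Real.log (1 / b)) = Real.log (1 / b) := by
    apply max_eq_right
    apply Real.log_nonneg
    rw [le_div_iff₀ hb0]; nlinarith
  rw [wfun, wfun, hla, hlb]
  have hsplit : Real.log (1 / a) = Real.log (1 / b) + Real.log (b / a) := by
    rw [← Real.log_mul (by positivity) (by positivity)]
    congr 1
    field_simp
  have h1 : Real.log (b / a) ≤ b / a - 1 := Real.log_le_sub_one_of_pos (by positivity)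
  have h2 : a * (b / a) = b := by field_simp
  have h3 : 0 ≤ Real.log (1 / b) := Real.log_nonneg (by rw [le_div_iff₀ hb0]; nlinarith)
  nlinarith [mul_le_mul_of_nonneg_left h1 ha.le]

lemma wfun_one : wfun 1 = 1 := by simp [wfun]

lemma wfun_mono {a b : ℝ} (ha : 0 ≤ a) (hab : a ≤ b) : wfun a ≤ wfun b := by
  rcases eq_or_lt_of_le ha with h0 | h0
  · rw [← h0, wfun_zero]; exact wfun_nonneg (le_trans ha hab)
  rcases le_or_gt b 1 with hb | hb
  · exact wfun_mono_aux h0 hab hb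
  · rw [wfun_eq_self_of_one_le hb.le]
    rcases le_or_gt a 1 with ha1 | ha1
    · calc wfun a ≤ wfun 1 := wfun_mono_aux h0 ha1 le_rfl
      _ = 1 := wfun_one
      _ ≤ b := hb.le
    · rw [wfun_eq_self_of_one_le ha1.le]; exact hab

lemma wfun_le_one {y : ℝ} (h0 : 0 ≤ y) (h1 : y ≤ 1) : wfun y ≤ 1 := by
  calc wfun y ≤ wfun 1 := wfun_mono h0 h1
  _ = 1 := wfun_one

/-- auxiliary: `z log⁺(S/z) ≤ Z (log⁺(S/Z) + 1)` for `0 ≤ z ≤ Z`. -/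
lemma zlog_le {z Z S : ℝ} (hz : 0 ≤ z) (hzZ : z ≤ Z) (hZ : 0 < Z) (hS : 0 < S) :
    z * max 0 (Real.log (S / z)) ≤ Z * (max 0 (Real.log (S / Z)) + 1) := by
  have hRHS : 0 ≤ Z * (max 0 (Real.log (S / Z)) + 1) := by positivity
  rcases eq_or_lt_of_le hz with h0 | h0
  · rw [← h0]; simpa using hRHS
  rcases le_or_gt (Real.log (S / z)) 0 with hneg | hpos
  · rw [max_eq_left hneg]; simpa using hRHS
  rw [max_eq_right hpos.le]
  have hsplit : Real.log (S / z) = Real.log (S / Z) + Real.log (Z / z) := by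
    rw [← Real.log_mul (by positivity) (by positivity)]
    congr 1
    field_simp
  have h1 : Real.log (Z / z) ≤ Z / z - 1 := Real.log_le_sub_one_of_pos (by positivity)
  have h2 : z * (Z / z) = Z := by field_simp
  have h3 : z * Real.log (S / Z) ≤ Z * max 0 (Real.log (S / Z)) := by
    rcases le_or_gt (Real.log (S / Z)) 0 with hc | hc
    · have : z * Real.log (S / Z) ≤ 0 := mul_nonpos_of_nonneg_of_nonpos h0.le hc
      have : (0:ℝ) ≤ Z * max 0 (Real.log (S / Z)) := by positivity
      linarith [mul_nonpos_of_nonneg_of_nonpos h0.le hc]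
    · rw [max_eq_right hc.le]
      exact mul_le_mul_of_nonneg_right hzZ hc.le
  nlinarith [mul_le_mul_of_nonneg_left h1 h0.le]

/-- The key pointwise estimate eliminating `G`. -/
lemma keyest {F G S m1 m2 d : ℝ} (hF : 0 ≤ F) (hG : 0 ≤ G) (hS : 0 < S)
    (hm1 : 0 ≤ m1) (hm2 : 0 ≤ m2)
    (h : d + G ≤ m1 * F + m2 * Real.sqrt (F * (G * max 0 (Real.log (S / G))))) :
    d ≤ (m1 + m2 ^ 2 + S) * wfun F := by
  have hLnn : (0:ℝ) ≤ max 0 (Real.log (1 / F)) := le_max_left _ _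
  rcases eq_or_lt_of_le hF with h0 | hF0
  · rw [← h0] at h ⊢
    rw [wfun_zero, mul_zero]
    rw [zero_mul, Real.sqrt_zero, mul_zero, mul_zero] at h
    linarith
  set L := max 0 (Real.log (1 / F)) with hLdef
  have hwf : wfun F = F * (1 + L) := rfl
  rcases le_or_gt (S * F) G with hGS | hGS
  · -- G large: absorb into G by Young's inequality
    have hG0 : 0 < G := lt_of_lt_of_le (by positivity) hGS
    have hX : max 0 (Real.log (S / G)) ≤ L := by
      apply max_le_max le_rfl
      apply Real.log_le_log (by positivity)
      rw [div_le_div_iff₀ hG0 hF0]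
      linarith
    have hXnn : (0:ℝ) ≤ max 0 (Real.log (S / G)) := le_max_left _ _
    set X := max 0 (Real.log (S / G)) with hXdef
    have hrw : F * (G * X) = (F * X) * G := by ring
    have hsq : m2 * Real.sqrt (F * (G * X)) ≤ (m2 ^ 2 * (F * X) + G) / 2 := by
      rw [hrw, Real.sqrt_mul (by positivity)]
      have h2ab := two_mul_le_add_sq (m2 * Real.sqrt (F * X)) (Real.sqrt G)
      rw [Real.sq_sqrt hG, mul_pow, Real.sq_sqrt (by positivity)] at h2ab
      nlinarith [Real.sqrt_nonneg (F * X), Real.sqrt_nonneg G]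
    have hFX : F * X ≤ F * L := mul_le_mul_of_nonneg_left hX hF
    have hd : d ≤ m1 * F + m2 ^ 2 * (F * L) / 2 := by nlinarith [sq_nonneg m2]
    rw [hwf]
    nlinarith [mul_nonneg (mul_nonneg hm1 hF) hLnn, mul_nonneg (mul_nonneg hS.le hF) hLnn,
      mul_nonneg (mul_nonneg (sq_nonneg m2) hF) hLnn, mul_nonneg hS.le hF,
      mul_nonneg (sq_nonneg m2) hF]
  · -- G small: G log⁺(S/G) ≤ SF(1+L)
    have hZ : 0 < S * F := by positivity
    have hzl := zlog_le hG hGS.le hZ hS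
    have hSF : S / (S * F) = 1 / F := by field_simp
    rw [hSF] at hzl
    have hsqle : Real.sqrt (F * (G * max 0 (Real.log (S / G)))) ≤
        Real.sqrt (F ^ 2 * (S * (1 + L))) := by
      apply Real.sqrt_le_sqrt
      calc F * (G * max 0 (Real.log (S / G))) ≤ F * (S * F * (L + 1)) := by
            apply mul_le_mul_of_nonneg_left _ hF
            simpa [hLdef] using hzl
      _ = F ^ 2 * (S * (1 + L)) := by ring
    have hsqrw : Real.sqrt (F ^ 2 * (S * (1 + L))) = F * Real.sqrt (S * (1 + L)) := by
      rw [Real.sqrt_mul (by positivity), Real.sqrt_sq hF]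
    have hs1 : Real.sqrt (S * (1 + L)) = Real.sqrt S * Real.sqrt (1 + L) :=
      Real.sqrt_mul hS.le _
    have hs2 : Real.sqrt (1 + L) ≤ 1 + L := by
      nlinarith [Real.sq_sqrt (by positivity : (0:ℝ) ≤ 1 + L), Real.sqrt_nonneg (1 + L), le_max_left (0:ℝ) (Real.log (1/F))]
    have hs3 : m2 * Real.sqrt S ≤ (m2 ^ 2 + S) / 2 := by
      have h2ab := two_mul_le_add_sq m2 (Real.sqrt S)
      rw [Real.sq_sqrt hS.le] at h2ab
      linarith
    have hch : m2 * Real.sqrt (F * (G * max 0 (Real.log (S / G)))) ≤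
        ((m2 ^ 2 + S) / 2) * ((1 + L) * F) := by
      calc m2 * Real.sqrt (F * (G * max 0 (Real.log (S / G))))
          ≤ m2 * (F * (Real.sqrt S * Real.sqrt (1 + L))) := by
            apply mul_le_mul_of_nonneg_left _ hm2
            rw [← hs1, ← hsqrw]
            exact hsqle
      _ = (m2 * Real.sqrt S) * (Real.sqrt (1 + L) * F) := by ring
      _ ≤ ((m2 ^ 2 + S) / 2) * ((1 + L) * F) := by
            apply mul_le_mul hs3 (mul_le_mul_of_nonneg_right hs2 hF)
              (by positivity) (by positivity)
    rw [hwf]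
    nlinarith [mul_nonneg (mul_nonneg hm1 hF) hLnn, mul_nonneg hS.le hF,
      mul_nonneg (sq_nonneg m2) hF, mul_nonneg (mul_nonneg hS.le hF) hLnn,
      mul_nonneg (mul_nonneg (sq_nonneg m2) hF) hLnn]

lemma Ioo_disj_of_le {a b c d : ℝ} (h : b ≤ c) : Disjoint (Ioo a b) (Ioo c d) := by
  rw [Set.disjoint_left]
  rintro x ⟨_, h2⟩ ⟨h3, _⟩
  exact absurd (h2.trans_le h) (not_lt.mpr h3.le)

lemma abscont_continuousOn {f : ℝ → ℝ} {β : ℝ} (hf : AbsContOn f 0 β) :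
    ContinuousOn f (Icc 0 β) := by
  intro x hx
  rw [Metric.continuousWithinAt_iff]
  intro ε hε
  obtain ⟨δ, hδ, hprop⟩ := hf ε hε
  refine ⟨δ, hδ, fun {y} hy hyx => ?_⟩
  have h1 := hprop 1 (fun _ => min y x) (fun _ => max y x) ?_ ?_ ?_
  · rw [Fin.sum_univ_one] at h1
    rw [Real.dist_eq]
    rcases le_total y x with h | h
    · rw [min_eq_left h, max_eq_right h] at h1
      rw [abs_sub_comm]
      exact h1
    · rw [min_eq_right h, max_eq_left h] at h1
      exact h1
  · intro i
    exact ⟨le_min hy.1 hx.1, min_le_max, max_le hy.2 hx.2⟩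
  · intro i j hij
    exact absurd (Subsingleton.elim i j) hij
  · rw [Fin.sum_univ_one]
    rw [Real.dist_eq] at hyx
    rcases le_total y x with h | h
    · rw [min_eq_left h, max_eq_right h]
      calc x - y ≤ |y - x| := by rw [abs_sub_comm]; exact le_abs_self _
      _ < δ := hyx
    · rw [min_eq_right h, max_eq_left h]
      calc y - x ≤ |y - x| := le_abs_self _
      _ < δ := hyx

lemma abscont_piece {f : ℝ → ℝ} {β δ : ℝ} (hδ : 0 < δ)
    (hprop : ∀ n : ℕ, ∀ c d : Fin n → ℝ,
      (∀ i, 0 ≤ c i ∧ c i ≤ d i ∧ d i ≤ β) →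
      (∀ i j, i ≠ j → Disjoint (Ioo (c i) (d i)) (Ioo (c j) (d j))) →
      (∑ i, (d i - c i)) < δ → (∑ i, |f (d i) - f (c i)|) < 1)
    {a b : ℝ} (ha : 0 ≤ a) (hb : b ≤ β) (hlen : b - a < δ) :
    eVariationOn f (Icc a b) ≤ 1 := by
  rw [eVariationOn]
  apply iSup_le
  rintro ⟨n, u, hu, hmem⟩
  dsimp only
  have key : ∑ i ∈ Finset.range n, edist (f (u (i + 1))) (f (u i))
      = ENNReal.ofReal (∑ i ∈ Finset.range n, |f (u (i+1)) - f (u i)|) := by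
    rw [ENNReal.ofReal_sum_of_nonneg (fun i _ => abs_nonneg _)]
    apply Finset.sum_congr rfl
    intro i _
    rw [edist_dist, Real.dist_eq]
  rw [key]
  have hsum : (∑ i ∈ Finset.range n, |f (u (i+1)) - f (u i)|) < 1 := by
    have := hprop n (fun i : Fin n => u i) (fun i : Fin n => u (i + 1)) ?_ ?_ ?_
    · rwa [Fin.sum_univ_eq_sum_range (fun i => |f (u (i+1)) - f (u i)|)] at this
    · intro i
      obtain ⟨hi1, hi2⟩ := hmem i
      obtain ⟨hj1, hj2⟩ := hmem (i + 1 : ℕ)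
      exact ⟨ha.trans hi1, hu (Nat.le_succ _), hj2.trans hb⟩
    · intro i j hij
      rcases lt_or_gt_of_ne (fun h => hij (Fin.ext (by exact_mod_cast congrArg Fin.val h))) with h | h
      · exact Ioo_disj_of_le (hu (by exact_mod_cast h))
      · exact (Ioo_disj_of_le (hu (by exact_mod_cast h))).symm
    · rw [Fin.sum_univ_eq_sum_range (fun i => u (i+1) - u i), Finset.sum_range_sub]
      calc u n - u 0 ≤ b - a := sub_le_sub (hmem n).2 (hmem 0).1
      _ < δ := hlen
  calc ENNReal.ofReal (∑ i ∈ Finset.range n, |f (u (i+1)) - f (u i)|)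
      ≤ ENNReal.ofReal 1 := ENNReal.ofReal_le_ofReal hsum.le
  _ = 1 := ENNReal.ofReal_one

lemma abscont_bv {f : ℝ → ℝ} {β : ℝ} (hβ : 0 ≤ β) (hf : AbsContOn f 0 β) :
    BoundedVariationOn f (Icc 0 β) := by
  obtain ⟨δ, hδ, hprop⟩ := hf 1 one_pos
  have main : ∀ n : ℕ, ∀ b : ℝ, 0 ≤ b → b ≤ β → b ≤ n * (δ / 2) →
      eVariationOn f (Icc 0 b) ≤ (n : ENNReal) := by
    intro n
    induction n with
    | zero =>
      intro b hb0 hbβ hbn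
      simp only [Nat.cast_zero, zero_mul] at hbn
      have : b = 0 := le_antisymm hbn hb0
      subst this
      rw [Set.Icc_self]
      rw [eVariationOn.subsingleton f (Set.subsingleton_singleton)]
      exact zero_le
    | succ n ih =>
      intro b hb0 hbβ hbn
      rcases le_or_gt b (n * (δ / 2)) with h | h
      · exact (ih b hb0 hbβ h).trans (by exact_mod_cast Nat.cast_le.mpr (Nat.le_succ n))
      · set m := (n : ℝ) * (δ / 2) with hm
        have hm0 : 0 ≤ m := by positivity
        have hmb : m ≤ b := h.le
        have split := eVariationOn.Icc_add_Icc f (s := Icc 0 b) hm0 hmb ⟨hm0, hmb⟩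
        rw [Set.inter_eq_self_of_subset_right (Set.Icc_subset_Icc le_rfl hmb),
          Set.inter_eq_self_of_subset_right (Set.Icc_subset_Icc hm0 le_rfl),
          Set.inter_self] at split
        rw [← split]
        have h1 : eVariationOn f (Icc 0 m) ≤ (n : ENNReal) :=
          ih m hm0 (hmb.trans hbβ) le_rfl
        have h2 : eVariationOn f (Icc m b) ≤ 1 := by
          apply abscont_piece hδ hprop hm0 hbβ
          have : b ≤ (n + 1 : ℝ) * (δ / 2) := by exact_mod_cast hbn
          nlinarith
        calc eVariationOn f (Icc 0 m) + eVariationOn f (Icc m b)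
            ≤ (n : ENNReal) + 1 := add_le_add h1 h2
        _ = ((n + 1 : ℕ) : ENNReal) := by push_cast; ring
  obtain ⟨N, hN⟩ := exists_nat_ge (β / (δ / 2))
  have hβN : β ≤ N * (δ / 2) := by
    rw [div_le_iff₀ (by positivity)] at hN
    linarith
  have := main N β hβ le_rfl hβN
  exact ne_top_of_le_ne_top (by simp) this

/-- Chain decomposition: finitely many pairwise disjoint nondegenerate closed
subintervals of `[z, τ]` leave finitely many "gap" intervals. -/
lemma chain (g : ℝ → ℝ) :
    ∀ (N : ℕ) (F : Finset (ℝ × ℝ)), F.card = N → ∀ (z τ : ℝ), z ≤ τ →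
    (∀ p ∈ F, z ≤ p.1 ∧ p.1 < p.2 ∧ p.2 ≤ τ) →
    ((F : Set (ℝ × ℝ)).PairwiseDisjoint (fun p => Icc p.1 p.2)) →
    ∃ (n : ℕ) (c d : Fin n → ℝ), (∀ i, z ≤ c i ∧ c i ≤ d i ∧ d i ≤ τ) ∧
      (∀ i j, i ≠ j → Disjoint (Ioo (c i) (d i)) (Ioo (c j) (d j))) ∧
      (∑ i, (d i - c i)) = (τ - z) - ∑ p ∈ F, (p.2 - p.1) ∧
      g τ - g z = (∑ p ∈ F, (g p.2 - g p.1)) + ∑ i, (g (d i) - g (c i)) := by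
  intro N
  induction N with
  | zero =>
    intro F hcard z τ hzτ hF hdisj
    rw [Finset.card_eq_zero] at hcard
    subst hcard
    refine ⟨1, fun _ => z, fun _ => τ, ?_, ?_, ?_, ?_⟩
    · intro i; exact ⟨le_rfl, hzτ, le_rfl⟩
    · intro i j hij; exact absurd (Subsingleton.elim i j) hij
    · simp [Fin.sum_univ_one]
    · simp [Fin.sum_univ_one]
  | succ N ih =>
    intro F hcard z τ hzτ hF hdisj
    have hne : F.Nonempty := Finset.card_pos.mp (by omega)
    obtain ⟨p₀, hp₀F, hp₀max⟩ := Finset.exists_max_image F Prod.fst hne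
    obtain ⟨hzp₀, hp₀lt, hp₀τ⟩ := hF p₀ hp₀F
    set F' := F.erase p₀ with hF'
    have hcard' : F'.card = N := by
      rw [hF', Finset.card_erase_of_mem hp₀F, hcard]; omega
    have hF'mem : ∀ p ∈ F', z ≤ p.1 ∧ p.1 < p.2 ∧ p.2 ≤ p₀.1 := by
      intro p hp
      have hpF := Finset.mem_of_mem_erase hp
      have hpne := Finset.ne_of_mem_erase hp
      obtain ⟨h1, h2, h3⟩ := hF p hpF
      refine ⟨h1, h2, ?_⟩
      by_contra hcon
      push_neg at hcon
      have hd : Disjoint (Icc p.1 p.2) (Icc p₀.1 p₀.2) :=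
        hdisj (by exact_mod_cast hpF) (by exact_mod_cast hp₀F) hpne
      have hmem : p₀.1 ∈ Icc p.1 p.2 ∩ Icc p₀.1 p₀.2 :=
        ⟨⟨hp₀max p hpF, hcon.le⟩, le_rfl, hp₀lt.le⟩
      rw [Set.disjoint_iff_inter_eq_empty] at hd
      rw [hd] at hmem
      exact hmem
    obtain ⟨n, c, d, hcd, hdisj', hsum, htel⟩ :=
      ih F' hcard' z p₀.1 hzp₀ hF'mem
        (hdisj.subset (by exact_mod_cast Finset.erase_subset _ _))
    refine ⟨n + 1, Fin.snoc c p₀.2, Fin.snoc d τ, ?_, ?_, ?_, ?_⟩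
    · intro i
      rcases Fin.eq_castSucc_or_eq_last i with ⟨i', rfl⟩ | rfl
      · simp only [Fin.snoc_castSucc]
        obtain ⟨h1, h2, h3⟩ := hcd i'
        exact ⟨h1, h2, h3.trans (hp₀lt.le.trans hp₀τ)⟩
      · simp only [Fin.snoc_last]
        exact ⟨hzp₀.trans hp₀lt.le, hp₀τ, le_rfl⟩
    · intro i j hij
      rcases Fin.eq_castSucc_or_eq_last i with ⟨i', rfl⟩ | rfl <;>
        rcases Fin.eq_castSucc_or_eq_last j with ⟨j', rfl⟩ | rfl
      · simp only [Fin.snoc_castSucc]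
        exact hdisj' i' j' (fun h => hij (by rw [h]))
      · simp only [Fin.snoc_last, Fin.snoc_castSucc]
        exact Ioo_disj_of_le ((hcd i').2.2.trans hp₀lt.le)
      · simp only [Fin.snoc_last, Fin.snoc_castSucc]
        exact (Ioo_disj_of_le ((hcd j').2.2.trans hp₀lt.le)).symm
      · exact absurd rfl hij
    · rw [Fin.sum_univ_castSucc]
      simp only [Fin.snoc_castSucc, Fin.snoc_last]
      rw [hsum, ← Finset.add_sum_erase _ _ hp₀F, ← hF']
      ring
    · rw [Fin.sum_univ_castSucc]
      simp only [Fin.snoc_castSucc, Fin.snoc_last]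
      rw [← Finset.add_sum_erase _ _ hp₀F, ← hF']
      have : g p₀.1 - g z = (∑ p ∈ F', (g p.2 - g p.1)) + ∑ i, (g (d i) - g (c i)) := htel
      linarith

/-- The explicit supersolution profile. -/
noncomputable def phi (cc x : ℝ) : ℝ := Real.exp (1 - cc * Real.exp (-x))

lemma phi_pos (cc x : ℝ) : 0 < phi cc x := Real.exp_pos _

lemma hasDerivAt_phi (cc x : ℝ) :
    HasDerivAt (phi cc) (cc * Real.exp (-x) * phi cc x) x := by
  have h1 : HasDerivAt (fun x : ℝ => Real.exp (-x)) (-Real.exp (-x)) x := by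
    simpa [Function.comp_def] using (Real.hasDerivAt_exp (-x)).comp x (hasDerivAt_neg x)
  have h2 : HasDerivAt (fun x : ℝ => 1 - cc * Real.exp (-x)) (cc * Real.exp (-x)) x := by
    simpa using (h1.const_mul cc).const_sub (1:ℝ)
  have h3 := (Real.hasDerivAt_exp (1 - cc * Real.exp (-x))).comp x h2
  rw [show phi cc = fun x => Real.exp (1 - cc * Real.exp (-x)) from rfl]
  simpa [phi, mul_comm, Function.comp_def] using h3

lemma phi_mono {cc : ℝ} (hcc : 0 ≤ cc) : Monotone (phi cc) := by
  intro x y hxy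
  apply Real.exp_le_exp.mpr
  have : Real.exp (-y) ≤ Real.exp (-x) := Real.exp_le_exp.mpr (by linarith)
  nlinarith

lemma phi_le_one {cc x : ℝ} (h : Real.exp x ≤ cc) : phi cc x ≤ 1 := by
  rw [phi, Real.exp_le_one_iff]
  have h1 : Real.exp x * Real.exp (-x) = 1 := by rw [← Real.exp_add]; simp
  have h2 : (0:ℝ) < Real.exp (-x) := Real.exp_pos _
  have h3 : 1 ≤ cc * Real.exp (-x) := by nlinarith
  linarith

lemma phi_deriv_eq_wfun {cc x : ℝ} (h : Real.exp x ≤ cc) :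
    cc * Real.exp (-x) * phi cc x = wfun (phi cc x) := by
  have h1 : Real.exp x * Real.exp (-x) = 1 := by rw [← Real.exp_add]; simp
  have h2 : (0:ℝ) < Real.exp (-x) := Real.exp_pos _
  have hge : 1 ≤ cc * Real.exp (-x) := by nlinarith
  have hlog : Real.log (1 / phi cc x) = cc * Real.exp (-x) - 1 := by
    rw [one_div, phi, ← Real.exp_neg, Real.log_exp]
    ring
  rw [wfun, hlog, max_eq_right (by linarith)]
  ring

lemma phiform (cc x : ℝ) :
    cc * Real.exp (-x) * phi cc x = (cc * Real.exp (-x)) * Real.exp (1 - cc * Real.exp (-x)) :=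
  rfl

lemma sexp_anti {s t : ℝ} (ht : 1 ≤ t) (hts : t ≤ s) :
    s * Real.exp (1 - s) ≤ t * Real.exp (1 - t) := by
  have h2 : s ≤ t * Real.exp (s - t) := by
    have ha : s - t + 1 ≤ Real.exp (s - t) := by
      have := Real.add_one_le_exp (s - t); linarith
    have hb : t * (s - t + 1) ≤ t * Real.exp (s - t) :=
      mul_le_mul_of_nonneg_left ha (by linarith)
    nlinarith
  calc s * Real.exp (1 - s) ≤ (t * Real.exp (s - t)) * Real.exp (1 - s) :=
        mul_le_mul_of_nonneg_right h2 (Real.exp_pos _).le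
  _ = t * (Real.exp (s - t) * Real.exp (1 - s)) := by ring
  _ = t * Real.exp (1 - t) := by rw [← Real.exp_add]; ring_nf

lemma phi'_mono {cc u v : ℝ} (huv : u ≤ v) (hv : Real.exp v ≤ cc) :
    cc * Real.exp (-u) * phi cc u ≤ cc * Real.exp (-v) * phi cc v := by
  rw [phiform, phiform]
  apply sexp_anti
  · have h1 : Real.exp v * Real.exp (-v) = 1 := by rw [← Real.exp_add]; simp
    nlinarith [Real.exp_pos (-v)]
  · have : Real.exp (-v) ≤ Real.exp (-u) := Real.exp_le_exp.mpr (by linarith)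
    have hcc : 0 < cc := lt_of_lt_of_le (Real.exp_pos v) hv
    nlinarith

/-- Tangent-line inequality for the convex profile `phi`. -/
lemma phi_tangent {cc p q : ℝ} (hpq : p ≤ q) (hq : Real.exp q ≤ cc) :
    wfun (phi cc p) * (q - p) ≤ phi cc q - phi cc p := by
  rcases eq_or_lt_of_le hpq with rfl | hlt
  · simp
  have hcont : ContinuousOn (phi cc) (Icc p q) :=
    fun x _ => ((hasDerivAt_phi cc x).continuousAt).continuousWithinAt
  obtain ⟨ξ, hξ, hslope⟩ := exists_hasDerivAt_eq_slope (phi cc)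
    (fun x => cc * Real.exp (-x) * phi cc x) hlt hcont
    (fun x _ => hasDerivAt_phi cc x)
  have hp : Real.exp p ≤ cc := le_trans (Real.exp_le_exp.mpr hpq) hq
  have hmono : wfun (phi cc p) ≤ cc * Real.exp (-ξ) * phi cc ξ := by
    rw [← phi_deriv_eq_wfun hp]
    exact phi'_mono hξ.1.le (le_trans (Real.exp_le_exp.mpr hξ.2.le) hq)
  have := mul_le_mul_of_nonneg_right hmono (by linarith : (0:ℝ) ≤ q - p)
  rw [hslope] at this
  calc wfun (phi cc p) * (q - p) ≤ (phi cc q - phi cc p) / (q - p) * (q - p) := this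
  _ = phi cc q - phi cc p := by
        rw [div_mul_cancel₀]
        linarith

/-- One-sided Lebesgue differentiation lower bound for integrals. -/
lemma lebesgue_right (A' : ℝ → ℝ) (hA' : Integrable A' (volume : Measure ℝ)) :
    ∀ᵐ x ∂(volume : Measure ℝ), ∀ ε > (0:ℝ), ∃ h₀ > (0:ℝ), ∀ u, x < u → u ≤ x + h₀ →
      (A' x - ε) * (u - x) ≤ ∫ y in Icc x u, A' y := by
  have hdoub : ∀ x : ℝ, ∃ᶠ r in 𝓝[>] (0:ℝ),
      volume (closedBall x (3 * r)) ≤ 6 * volume (closedBall x r) := by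
    intro x
    apply Filter.Eventually.frequently
    filter_upwards [self_mem_nhdsWithin] with r (hr : r ∈ Ioi (0:ℝ))
    rw [Real.volume_closedBall, Real.volume_closedBall]
    rw [show ((6:ENNReal) = ENNReal.ofReal (6:ℝ)) by norm_num [ENNReal.ofReal_ofNat],
      ← ENNReal.ofReal_mul (by norm_num)]
    apply ENNReal.ofReal_le_ofReal
    rw [mem_Ioi] at hr
    nlinarith
  set V := Vitali.vitaliFamily (volume : Measure ℝ) 6 hdoub with hV
  filter_upwards [V.ae_tendsto_average hA'.locallyIntegrable] with x hx
  intro ε hε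
  have hev : ∀ᶠ a in V.filterAt x, A' x - ε < ⨍ y in a, A' y :=
    hx.eventually (lt_mem_nhds (by linarith))
  rw [VitaliFamily.eventually_filterAt_iff] at hev
  obtain ⟨δ₀, hδ₀, hprop⟩ := hev
  refine ⟨δ₀, hδ₀, fun u hxu hu => ?_⟩
  have hmem : Icc x u ∈ V.setsAt x := by
    rw [hV]
    show IsClosed (Icc x u) ∧ (interior (Icc x u)).Nonempty ∧
      ∃ r, Icc x u ⊆ closedBall x r ∧ volume (closedBall x (3 * r)) ≤ 6 * volume (Icc x u)
    refine ⟨isClosed_Icc, by rw [interior_Icc]; exact nonempty_Ioo.mpr hxu, u - x, ?_, ?_⟩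
    · rw [Real.closedBall_eq_Icc]
      exact Icc_subset_Icc (by linarith) (by linarith)
    · rw [Real.volume_closedBall, Real.volume_Icc]
      rw [show ((6:ENNReal) = ENNReal.ofReal (6:ℝ)) by norm_num [ENNReal.ofReal_ofNat],
        ← ENNReal.ofReal_mul (by norm_num)]
      apply ENNReal.ofReal_le_ofReal
      nlinarith
  have hsub : Icc x u ⊆ closedBall x δ₀ := by
    rw [Real.closedBall_eq_Icc]
    exact Icc_subset_Icc (by linarith) (by linarith)
  have havg := hprop _ hmem hsub
  rw [setAverage_eq, Real.volume_real_Icc_of_le hxu.le, smul_eq_mul] at havg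
  have hpos : 0 < u - x := by linarith
  have := mul_le_mul_of_nonneg_left havg.le hpos.le
  calc (A' x - ε) * (u - x) = (u - x) * (A' x - ε) := by ring
  _ ≤ (u - x) * ((u - x)⁻¹ * ∫ y in Icc x u, A' y) := this
  _ = ∫ y in Icc x u, A' y := by field_simp

/-- Per-point increment comparison. -/
lemma good_point {f Y B A' : ℝ → ℝ} {cc β x τ : ℝ}
    (hxI : x ∈ Ioo 0 τ) (hτβ : τ ≤ β)
    (hYdef : ∀ r, Y r = phi cc (B r))
    (hBadd : ∀ t u, 0 ≤ t → t ≤ u → u ≤ β → B u - B t = (u - t) + ∫ y in Icc t u, A' y)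
    (hBmono : ∀ t u, 0 ≤ t → t ≤ u → u ≤ β → B t ≤ B u)
    (hexp : ∀ r, 0 ≤ r → r ≤ β → Real.exp (B r) ≤ cc)
    (hfx0 : 0 ≤ f x) (hfY : f x ≤ Y x)
    (hA'x : 0 ≤ A' x)
    (hdiff : DifferentiableAt ℝ f x)
    (hdbd : deriv f x ≤ A' x * wfun (f x))
    (hleb : ∀ ε > (0:ℝ), ∃ h₀ > (0:ℝ), ∀ u, x < u → u ≤ x + h₀ →
      (A' x - ε) * (u - x) ≤ ∫ y in Icc x u, A' y) :
    ∃ h₀ > (0:ℝ), ∀ u, x < u → u ≤ x + h₀ → u ≤ τ → f u - f x ≤ Y u - Y x := by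
  have hx0 : 0 < x := hxI.1
  have hxβ : x ≤ β := le_trans hxI.2.le hτβ
  have hYx1 : Y x ≤ 1 := by
    rw [hYdef]; exact phi_le_one (hexp x hx0.le hxβ)
  have hYxpos : 0 < Y x := by rw [hYdef]; exact phi_pos _ _
  set w₀ := wfun (Y x) with hw₀
  have hwpos : 0 < w₀ := lt_of_lt_of_le hYxpos (self_le_wfun hYxpos.le)
  have hw1 : w₀ ≤ 1 := wfun_le_one hYxpos.le hYx1
  set ε := w₀ / 4 with hεdef
  have hε : 0 < ε := by positivity
  -- derivative control
  have hder := (hdiff.hasDerivAt).isLittleO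
  have hder2 := (hder.def hε)
  rw [Metric.eventually_nhds_iff] at hder2
  obtain ⟨h₁, hh₁, hball⟩ := hder2
  obtain ⟨h₂, hh₂, hlebp⟩ := hleb ε hε
  refine ⟨min (h₁ / 2) h₂, by positivity, fun u hxu hule huτ => ?_⟩
  have hux : 0 < u - x := by linarith
  have hu0 : 0 ≤ u := by linarith
  have huβ : u ≤ β := le_trans huτ hτβ
  have hd1 : |f u - f x - (u - x) * deriv f x| ≤ ε * (u - x) := by
    have hdist : dist u x < h₁ := by
      rw [Real.dist_eq, abs_of_pos hux]
      have := min_le_left (h₁/2) h₂; linarith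
    have := hball hdist
    simp only [smul_eq_mul, Real.norm_eq_abs] at this
    calc |f u - f x - (u - x) * deriv f x| ≤ ε * |u - x| := this
    _ = ε * (u - x) := by rw [abs_of_pos hux]
  have hd2 : f u - f x ≤ deriv f x * (u - x) + ε * (u - x) := by
    have := abs_le.mp hd1
    linarith [this.2]
  have hd3 : deriv f x * (u - x) ≤ A' x * w₀ * (u - x) := by
    apply mul_le_mul_of_nonneg_right _ hux.le
    calc deriv f x ≤ A' x * wfun (f x) := hdbd
    _ ≤ A' x * w₀ := mul_le_mul_of_nonneg_left (wfun_mono hfx0 hfY) hA'x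
  have hd4 : (A' x - ε) * (u - x) ≤ ∫ y in Icc x u, A' y :=
    hlebp u hxu (le_trans hule (by linarith [min_le_right (h₁/2) h₂]))
  have hd5 : ∫ y in Icc x u, A' y = B u - B x - (u - x) := by
    rw [hBadd x u hx0.le (by linarith) huβ]; ring
  have hd6 : A' x * (u - x) ≤ B u - B x - (u - x) + ε * (u - x) := by
    rw [← hd5]; nlinarith
  have hd7 : A' x * w₀ * (u - x) ≤ w₀ * (B u - B x - (u - x) + ε * (u - x)) := by
    calc A' x * w₀ * (u - x) = w₀ * (A' x * (u - x)) := by ring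
    _ ≤ _ := mul_le_mul_of_nonneg_left hd6 hwpos.le
  have htan : w₀ * (B u - B x) ≤ Y u - Y x := by
    rw [hYdef, hYdef, hw₀, hYdef]
    exact phi_tangent (hBmono x u hx0.le (by linarith) huβ) (hexp u hu0 huβ)
  nlinarith [mul_pos hwpos hux]
/-- The main covering estimate: if locally (a.e.) the increment of `f` is dominated by that of
`Y`, and `f` is absolutely continuous, then globally `f τ - f 0 ≤ Y τ - Y 0 + ε`. -/
lemma main_cover {f Y : ℝ → ℝ} {β τ : ℝ} (hτ : 0 < τ) (hτβ : τ ≤ β)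
    (hac : AbsContOn f 0 β)
    (hYmono : MonotoneOn Y (Icc 0 τ))
    (hgood : ∀ᵐ x ∂(volume : Measure ℝ), x ∈ Ioo 0 τ →
      ∃ h₀ > (0:ℝ), ∀ u, x < u → u ≤ x + h₀ → u ≤ τ → f u - f x ≤ Y u - Y x) :
    ∀ ε > (0:ℝ), f τ - f 0 ≤ Y τ - Y 0 + ε := by
  intro ε hε
  obtain ⟨δ, hδ, hprop⟩ := hac ε hε
  -- the good set
  set Good : ℝ → Prop := fun x =>
    ∃ h₀ > (0:ℝ), ∀ u, x < u → u ≤ x + h₀ → u ≤ τ → f u - f x ≤ Y u - Y x with hGood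
  set s : Set ℝ := {x | x ∈ Ioo 0 τ ∧ Good x} with hs
  have hsnull : volume (Ioo 0 τ \ s) = 0 := by
    have : Ioo 0 τ \ s ⊆ {x | ¬(x ∈ Ioo 0 τ → Good x)} := by
      intro x hx
      simp only [mem_setOf_eq, Classical.not_imp]
      exact ⟨hx.1, fun hg => hx.2 ⟨hx.1, hg⟩⟩
    exact measure_mono_null this (by rw [← ae_iff] at *; exact hgood)
  -- the family of candidate intervals
  set t : Set (ℝ × ℝ) := {p | 0 < p.1 ∧ p.1 < p.2 ∧ p.2 ≤ τ ∧
    f p.2 - f p.1 ≤ Y p.2 - Y p.1} with ht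
  have hfine : ∀ x ∈ s, ∀ ε' > (0:ℝ), ∃ p ∈ t, p.2 - p.1 ≤ ε' ∧ p.1 = x := by
    rintro x ⟨hxI, h₀, hh₀, hgx⟩ ε' hε'
    refine ⟨(x, min τ (x + min ε' h₀)), ?_, ?_, rfl⟩
    · have hxu : x < min τ (x + min ε' h₀) :=
        lt_min hxI.2 (by have := lt_min hε' hh₀; linarith)
      refine ⟨hxI.1, hxu, min_le_left _ _, ?_⟩
      exact hgx _ hxu (by
        have h5 : min τ (x + min ε' h₀) ≤ x + min ε' h₀ := min_le_right _ _
        have h6 := min_le_right ε' h₀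
        linarith) (min_le_left _ _)
    · have h5 : min τ (x + min ε' h₀) ≤ x + min ε' h₀ := min_le_right _ _
      have h6 := min_le_left ε' h₀
      simp only
      linarith
  obtain ⟨ufam, hufam_t, hucount, hudisj, hucover⟩ :=
    Vitali.exists_disjoint_covering_ae (ι := ℝ × ℝ) volume s t 6
      (fun p => p.2 - p.1) (fun p => p.1) (fun p => Icc p.1 p.2)
      (fun p hp => by
        have h1 : p.1 < p.2 := hp.2.1
        rw [Real.closedBall_eq_Icc]
        exact Icc_subset_Icc (by linarith) (by linarith))
      (fun p hp => by
        rw [Real.volume_closedBall, Real.volume_Icc]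
        have h1 : (0:ℝ) ≤ p.2 - p.1 := by
          have := hp.2.1; linarith
        rw [show (2 * (3 * (p.2 - p.1))) = 6 * (p.2 - p.1) by ring,
          ENNReal.ofReal_mul (by norm_num)]
        gcongr <;> simp [ENNReal.ofReal_ofNat])
      (fun p hp => by
        rw [interior_Icc]
        exact nonempty_Ioo.mpr hp.2.1)
      (fun p _ => isClosed_Icc)
      hfine
  have hIoonull : volume (Ioo 0 τ \ ⋃ p ∈ ufam, Icc p.1 p.2) = 0 := by
    apply measure_mono_null (t := (s \ ⋃ p ∈ ufam, Icc p.1 p.2) ∪ (Ioo 0 τ \ s)) _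
      (by rw [measure_union_null_iff]; exact ⟨hucover, hsnull⟩)
    intro x hx
    by_cases hxs : x ∈ s
    · exact Or.inl ⟨hxs, hx.2⟩
    · exact Or.inr ⟨hx.1, hxs⟩
  -- extract a finite subfamily covering up to measure δ
  obtain ⟨v, hvt, hvdisj, hvmeas⟩ :
      ∃ v : Finset (ℝ × ℝ), (∀ p ∈ v, p ∈ t) ∧
        ((v : Set (ℝ × ℝ)).PairwiseDisjoint (fun p => Icc p.1 p.2)) ∧
        volume (Ioo 0 τ \ ⋃ p ∈ (v : Set (ℝ × ℝ)), Icc p.1 p.2) < ENNReal.ofReal δ := by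
    rcases ufam.eq_empty_or_nonempty with rfl | hne
    · exfalso
      simp only [mem_empty_iff_false, iUnion_of_empty, iUnion_empty, diff_empty] at hIoonull
      rw [Real.volume_Ioo, ENNReal.ofReal_eq_zero] at hIoonull
      linarith
    obtain ⟨e, rfl⟩ := hucount.exists_eq_range hne
    set Uf : ℕ → Set ℝ := fun n => ⋃ i ∈ Finset.range n, Icc (e i).1 (e i).2 with hUf
    have hUfmono : Monotone Uf := by
      intro a b hab
      apply Set.biUnion_subset_biUnion_left
      intro i hi
      exact Finset.mem_coe.mpr (Finset.mem_range.mpr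
        (lt_of_lt_of_le (Finset.mem_range.mp (Finset.mem_coe.mp hi)) hab))
    have hUfunion : ⋃ n, Uf n = ⋃ p ∈ range e, Icc p.1 p.2 := by
      rw [Set.biUnion_range]
      apply subset_antisymm
      · exact iUnion_subset fun n => iUnion₂_subset fun i _ => subset_iUnion_of_subset i le_rfl
      · intro x hx
        obtain ⟨i, hi⟩ := mem_iUnion.mp hx
        exact mem_iUnion.mpr ⟨i + 1, mem_iUnion₂.mpr ⟨i, Finset.mem_range.mpr (Nat.lt_succ_self i), hi⟩⟩
    set An : ℕ → Set ℝ := fun n => Ioo 0 τ \ Uf n with hAn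
    have hAnanti : Antitone An := fun a b hab => diff_subset_diff_right (hUfmono hab)
    have hAninter : ⋂ n, An n = Ioo 0 τ \ ⋃ n, Uf n := by
      rw [Set.diff_iUnion]
    have htend : Tendsto (fun n => volume (An n)) atTop (𝓝 0) := by
      have := MeasureTheory.tendsto_measure_iInter_atTop (μ := volume) (s := An)
        (fun n => ((measurableSet_Ioo.diff
          ((Finset.range n).measurableSet_biUnion (fun i _ => measurableSet_Icc))).nullMeasurableSet))
        hAnanti ⟨0, by
          apply ne_top_of_le_ne_top (b := volume (Ioo 0 τ)) _ (measure_mono diff_subset)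
          rw [Real.volume_Ioo]; exact ENNReal.ofReal_ne_top⟩
      rw [hAninter, hUfunion, hIoonull] at this
      exact this
    have hev := htend.eventually (gt_mem_nhds (by positivity : (0:ENNReal) < ENNReal.ofReal δ))
    obtain ⟨n, hn⟩ := hev.exists
    refine ⟨(Finset.range n).image e, ?_, ?_, ?_⟩
    · intro p hp
      obtain ⟨i, _, rfl⟩ := Finset.mem_image.mp hp
      exact hufam_t ⟨i, rfl⟩
    · apply hudisj.subset
      intro p hp
      obtain ⟨i, _, rfl⟩ := Finset.mem_image.mp (by exact_mod_cast hp)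
      exact ⟨i, rfl⟩
    · have : ⋃ p ∈ (↑(Finset.image e (Finset.range n)) : Set (ℝ × ℝ)), Icc p.1 p.2 = Uf n := by
        rw [hUf]
        ext x
        simp only [Finset.coe_image, mem_iUnion, Finset.mem_coe, Finset.mem_image,
          Finset.mem_range, exists_prop, Set.mem_image, Finset.coe_range, mem_Iio]
        constructor
        · rintro ⟨p, ⟨i, hi, rfl⟩, hx⟩; exact ⟨i, hi, hx⟩
        · rintro ⟨i, hi, hx⟩; exact ⟨e i, ⟨i, hi, rfl⟩, hx⟩
      rw [this]
      exact hn
  -- chain decomposition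
  have hvF : ∀ p ∈ v, (0:ℝ) ≤ p.1 ∧ p.1 < p.2 ∧ p.2 ≤ τ := by
    intro p hp
    obtain ⟨h1, h2, h3, _⟩ := hvt p hp
    exact ⟨h1.le, h2, h3⟩
  obtain ⟨n, c, d, hcd, hgapdisj, hgapsum, hftel⟩ :=
    chain f v.card v rfl 0 τ hτ.le hvF hvdisj
  obtain ⟨nY, cY, dY, hcdY, _, _, hYtel⟩ :=
    chain Y v.card v rfl 0 τ hτ.le hvF hvdisj
  -- the gaps have small total length
  have hsum0 : (0:ℝ) ≤ ∑ p ∈ v, (p.2 - p.1) :=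
    Finset.sum_nonneg (fun p hp => by have := (hvF p hp).2.1; linarith)
  have hlen : (∑ i, (d i - c i)) < δ := by
    have h1 : volume (Ioo 0 τ) ≤ volume (Ioo 0 τ \ ⋃ p ∈ (v : Set (ℝ×ℝ)), Icc p.1 p.2)
        + ∑ p ∈ v, volume (Icc p.1 p.2) := by
      calc volume (Ioo 0 τ)
          ≤ volume ((Ioo 0 τ \ ⋃ p ∈ (v : Set (ℝ×ℝ)), Icc p.1 p.2)
              ∪ ⋃ p ∈ v, Icc p.1 p.2) := by
            apply measure_mono
            intro x hx
            by_cases hxU : x ∈ ⋃ p ∈ (v : Set (ℝ×ℝ)), Icc p.1 p.2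
            · right; simpa using hxU
            · exact Or.inl ⟨hx, hxU⟩
      _ ≤ _ := by
            apply (measure_union_le _ _).trans
            gcongr
            exact measure_biUnion_finset_le v _
    rw [Real.volume_Ioo, sub_zero] at h1
    have h2 : ∑ p ∈ v, volume (Icc p.1 p.2) = ENNReal.ofReal (∑ p ∈ v, (p.2 - p.1)) := by
      rw [ENNReal.ofReal_sum_of_nonneg (fun p hp => by have := (hvF p hp).2.1; linarith)]
      exact Finset.sum_congr rfl fun p _ => Real.volume_Icc
    rw [h2] at h1
    have h3 : ENNReal.ofReal τ < ENNReal.ofReal δ + ENNReal.ofReal (∑ p ∈ v, (p.2 - p.1)) :=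
      lt_of_le_of_lt h1 (by
        apply ENNReal.add_lt_add_right ENNReal.ofReal_ne_top hvmeas)
    rw [← ENNReal.ofReal_add hδ.le hsum0] at h3
    have h4 : τ < δ + ∑ p ∈ v, (p.2 - p.1) :=
      (ENNReal.ofReal_lt_ofReal_iff (by linarith)).mp h3
    rw [hgapsum]
    linarith
  -- absolute continuity on the gaps
  have hgapac : (∑ i, |f (d i) - f (c i)|) < ε := by
    apply hprop n c d _ hgapdisj hlen
    intro i
    obtain ⟨h1, h2, h3⟩ := hcd i
    exact ⟨h1, h2, h3.trans hτβ⟩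
  -- combine
  have hsum_le : ∑ p ∈ v, (f p.2 - f p.1) ≤ ∑ p ∈ v, (Y p.2 - Y p.1) :=
    Finset.sum_le_sum fun p hp => (hvt p hp).2.2.2
  have hYgap : (0:ℝ) ≤ ∑ i, (Y (dY i) - Y (cY i)) := by
    apply Finset.sum_nonneg
    intro i _
    obtain ⟨h1, h2, h3⟩ := hcdY i
    have := hYmono ⟨h1, h2.trans h3⟩ ⟨h1.trans h2, h3⟩ h2
    linarith
  have hfgap : ∑ i, (f (d i) - f (c i)) ≤ ∑ i, |f (d i) - f (c i)| :=
    Finset.sum_le_sum fun i _ => le_abs_self _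
  linarith [hftel, hYtel]

end LiTitiAux

open LiTitiAux in
/-- **Lemma (Li–Titi).** A logarithmic (Osgood-type) uniqueness lemma: if nonnegative
functions `f, G` on `(0,𝒯)`, with `f` absolutely continuous and `f(0) = 0`, satisfy
`f' + G ≤ m₁ f + m₂ [f G log⁺(S/G)]^{1/2}` a.e. on `(0,𝒯)`, with `m₁, S ∈ L¹`,
`m₂ ∈ L²` and `S > 0` a.e., then `f ≡ 0` on `[0,𝒯)`.  (Note that in Lean `S/0 = 0`
and `log⁺ 0 = 0`, so the stated convention `G log⁺(S/G) = 0` when `G = 0` holds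
automatically.) -/
theorem osgood_logarithmic_uniqueness_lemma
    (𝒯 : ℝ) (h𝒯 : 0 < 𝒯) (m₁ m₂ S : ℝ → ℝ)
    (hm₁0 : ∀ t ∈ Ioo (0 : ℝ) 𝒯, 0 ≤ m₁ t) (hm₂0 : ∀ t ∈ Ioo (0 : ℝ) 𝒯, 0 ≤ m₂ t)
    (hS0 : ∀ t ∈ Ioo (0 : ℝ) 𝒯, 0 ≤ S t)
    (hm₁ : IntegrableOn m₁ (Ioo (0 : ℝ) 𝒯))
    (hS : IntegrableOn S (Ioo (0 : ℝ) 𝒯))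
    (hm₂ : Measurable m₂ ∧ IntegrableOn (fun t => m₂ t ^ 2) (Ioo (0 : ℝ) 𝒯))
    (hSpos : ∀ᵐ t ∂(volume.restrict (Ioo (0 : ℝ) 𝒯)), 0 < S t)
    (f G : ℝ → ℝ)
    (hf0 : ∀ t ∈ Ico (0 : ℝ) 𝒯, 0 ≤ f t) (hG0 : ∀ t ∈ Ioo (0 : ℝ) 𝒯, 0 ≤ G t)
    (hfac : ∀ b ∈ Ioo (0 : ℝ) 𝒯, AbsContOn f 0 b)
    (hfinit : f 0 = 0)
    (hineq : ∀ᵐ t ∂(volume.restrict (Ioo (0 : ℝ) 𝒯)),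
      deriv f t + G t
        ≤ m₁ t * f t
          + m₂ t * Real.sqrt (f t * (G t * max 0 (Real.log (S t / G t))))) :
    ∀ t ∈ Ico (0 : ℝ) 𝒯, f t = 0 := by
  intro t₀ ht₀
  rcases eq_or_lt_of_le ht₀.1 with h0 | ht₀pos
  · rw [← h0]; exact hfinit
  set β := (t₀ + 𝒯) / 2 with hβdef
  have hβI : β ∈ Ioo 0 𝒯 := ⟨by simp only [hβdef]; linarith [ht₀.2], by simp only [hβdef]; linarith [ht₀.2]⟩
  have ht₀β : t₀ ≤ β := by simp only [hβdef]; linarith [ht₀.2]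
  -- the integrable coefficient
  set A : ℝ → ℝ := fun s => m₁ s + m₂ s ^ 2 + S s with hA
  set A' : ℝ → ℝ := (Ioo (0:ℝ) 𝒯).indicator A with hA'
  have hAint : IntegrableOn A (Ioo 0 𝒯) := (hm₁.add hm₂.2).add hS
  have hA'int : Integrable A' := (integrable_indicator_iff measurableSet_Ioo).2 hAint
  have hA'nn : ∀ s, 0 ≤ A' s := by
    intro s
    rw [hA']
    by_cases hs : s ∈ Ioo 0 𝒯
    · rw [indicator_of_mem hs]
      have h1 := hm₁0 s hs
      have h2 := hS0 s hs
      have h3 := sq_nonneg (m₂ s)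
      simp only [hA]
      nlinarith
    · rw [indicator_of_notMem hs]
  set B : ℝ → ℝ := fun r => r + ∫ y in (0:ℝ)..r, A' y with hB
  have hBadd : ∀ t u : ℝ, 0 ≤ t → t ≤ u → u ≤ β →
      B u - B t = (u - t) + ∫ y in Icc t u, A' y := by
    intro t u _ htu _
    have hadd := intervalIntegral.integral_add_adjacent_intervals
      (a := (0:ℝ)) (b := t) (c := u) (f := A') (μ := volume)
      hA'int.intervalIntegrable hA'int.intervalIntegrable
    have hIcc : ∫ y in Icc t u, A' y = ∫ y in t..u, A' y := by
      rw [MeasureTheory.integral_Icc_eq_integral_Ioc, intervalIntegral.integral_of_le htu]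
    rw [hB, hIcc]
    simp only
    linarith
  have hBmono : ∀ t u : ℝ, 0 ≤ t → t ≤ u → u ≤ β → B t ≤ B u := by
    intro t u ht htu hu
    have h1 := hBadd t u ht htu hu
    have h2 : 0 ≤ ∫ y in Icc t u, A' y :=
      setIntegral_nonneg measurableSet_Icc (fun y _ => hA'nn y)
    linarith
  have hB00 : B 0 = 0 := by rw [hB]; simp
  have hBcont : Continuous B := continuous_id.add (hA'int.continuous_primitive 0)
  set M := B β with hM
  -- a.e. facts on (0, β)
  have hfacβ := hfac β hβI
  have hcont := abscont_continuousOn hfacβ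
  have hbv := abscont_bv hβI.1.le hfacβ
  have hdiffae : ∀ᵐ x ∂(volume : Measure ℝ), x ∈ Ioo 0 β → DifferentiableAt ℝ f x := by
    filter_upwards [(hbv.locallyBoundedVariationOn).ae_differentiableWithinAt_of_mem]
      with x hx hxI
    exact (hx (⟨hxI.1.le, hxI.2.le⟩ : x ∈ Icc 0 β)).differentiableAt
      (Icc_mem_nhds hxI.1 hxI.2)
  have hineq' := (ae_restrict_iff' measurableSet_Ioo).mp hineq
  have hSpos' := (ae_restrict_iff' measurableSet_Ioo).mp hSpos
  have hdbd : ∀ᵐ x ∂(volume : Measure ℝ), x ∈ Ioo 0 β → deriv f x ≤ A' x * wfun (f x) := by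
    filter_upwards [hineq', hSpos'] with x h1 h2 hxβ
    have hx𝒯 : x ∈ Ioo 0 𝒯 := ⟨hxβ.1, lt_of_lt_of_le hxβ.2 hβI.2.le⟩
    have hkey := keyest (hf0 x ⟨hx𝒯.1.le, hx𝒯.2⟩) (hG0 x hx𝒯) (h2 hx𝒯)
      (hm₁0 x hx𝒯) (hm₂0 x hx𝒯) (h1 hx𝒯)
    rw [hA', indicator_of_mem hx𝒯]
    exact hkey
  have hlebae := lebesgue_right A' hA'int
  -- the main estimate: `f t₀ ≤ η` for every positive `η`
  have key : ∀ η > (0:ℝ), f t₀ ≤ η := by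
    intro η hη
    set cc := (1 + |1 - Real.log η|) * Real.exp M with hcc
    have hccpos : 0 < cc := by positivity
    have hccM : Real.exp M ≤ cc := by
      rw [hcc]
      nlinarith [abs_nonneg (1 - Real.log η), Real.exp_pos M]
    have hexpB : ∀ r, 0 ≤ r → r ≤ β → Real.exp (B r) ≤ cc := fun r hr hrβ =>
      le_trans (Real.exp_le_exp.mpr (hBmono r β hr hrβ le_rfl)) hccM
    set Y : ℝ → ℝ := fun r => phi cc (B r) with hY
    have hphic : Continuous (phi cc) := by
      have h1 : Continuous (fun x : ℝ => 1 - cc * Real.exp (-x)) :=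
        continuous_const.sub (continuous_const.mul (Real.continuous_exp.comp continuous_neg))
      exact Real.continuous_exp.comp h1
    have hYcont : Continuous Y := hphic.comp hBcont
    have hYm : ∀ t u : ℝ, 0 ≤ t → t ≤ u → u ≤ β → Y t ≤ Y u := fun t u ht htu hu =>
      phi_mono hccpos.le (hBmono t u ht htu hu)
    have hY0 : Y 0 = Real.exp (1 - cc) := by rw [hY]; simp only [hB00]; rw [phi]; simp
    have hY0pos : 0 < Y 0 := by rw [hY0]; positivity
    have claim : ∀ s ∈ Icc 0 β, f s < Y s := by
      by_contra hcon
      push_neg at hcon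
      obtain ⟨s₀, hs₀, hfs₀⟩ := hcon
      set T := {s ∈ Icc (0:ℝ) β | Y s ≤ f s} with hT
      have hTne : T.Nonempty := ⟨s₀, hs₀, hfs₀⟩
      have hTbdd : BddBelow T := ⟨0, fun s hs => hs.1.1⟩
      set τ := sInf T with hτdef
      have hτcl : τ ∈ closure T := csInf_mem_closure hTne hTbdd
      have hτIcc : τ ∈ Icc 0 β :=
        closure_minimal (fun s hs => hs.1) isClosed_Icc hτcl
      have hτT : Y τ ≤ f τ := by
        have hfc : ContinuousWithinAt (fun s => f s - Y s) (Icc 0 β) τ :=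
          (hcont τ hτIcc).sub hYcont.continuousWithinAt
        have hneb : (𝓝[T] τ).NeBot := mem_closure_iff_nhdsWithin_neBot.mp hτcl
        have htd : Tendsto (fun s => f s - Y s) (𝓝[T] τ) (𝓝 (f τ - Y τ)) :=
          hfc.mono_left (nhdsWithin_mono τ (fun s hs => hs.1))
        have hev : ∀ᶠ s in 𝓝[T] τ, 0 ≤ f s - Y s :=
          eventually_nhdsWithin_of_forall (fun s hs => by linarith [hs.2])
        have := ge_of_tendsto htd hev
        linarith
      have hτpos : 0 < τ := by
        rcases hτIcc.1.lt_or_eq with h | h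
        · exact h
        · exfalso
          rw [← h] at hτT
          rw [hfinit] at hτT
          linarith
      have hbelow : ∀ s, s ∈ Ico 0 τ → f s ≤ Y s := by
        intro s hs
        by_contra hcon2
        push_neg at hcon2
        have hsT : s ∈ T := ⟨⟨hs.1, le_trans hs.2.le hτIcc.2⟩, hcon2.le⟩
        have := csInf_le hTbdd hsT
        linarith [hs.2]
      have hgood : ∀ᵐ x ∂(volume : Measure ℝ), x ∈ Ioo 0 τ →
          ∃ h₀ > (0:ℝ), ∀ u, x < u → u ≤ x + h₀ → u ≤ τ → f u - f x ≤ Y u - Y x := by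
        filter_upwards [hdiffae, hdbd, hlebae] with x hxd hxb hxl hxI
        have hxβ : x ∈ Ioo 0 β := ⟨hxI.1, lt_of_lt_of_le hxI.2 hτIcc.2⟩
        exact good_point hxI hτIcc.2 (fun r => rfl) hBadd hBmono hexpB
          (hf0 x ⟨hxβ.1.le, lt_trans hxβ.2 hβI.2⟩)
          (hbelow x ⟨hxI.1.le, hxI.2⟩) (hA'nn x) (hxd hxβ) (hxb hxβ) hxl
      have hYmonoOn : MonotoneOn Y (Icc 0 τ) := fun a ha b hb hab =>
        hYm a b ha.1 hab (le_trans hb.2 hτIcc.2)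
      have hmc := main_cover hτpos hτIcc.2 hfacβ hYmonoOn hgood (Y 0 / 2) (by positivity)
      rw [hfinit] at hmc
      linarith
    have h1 := claim t₀ ⟨ht₀.1, ht₀β⟩
    have h2 : Y t₀ ≤ phi cc M := phi_mono hccpos.le (hBmono t₀ β ht₀.1 ht₀β le_rfl)
    have h3 : phi cc M ≤ η := by
      rw [phi]
      have hccM2 : cc * Real.exp (-M) = 1 + |1 - Real.log η| := by
        rw [hcc, mul_assoc, ← Real.exp_add]
        simp
      rw [hccM2]
      calc Real.exp (1 - (1 + |1 - Real.log η|)) ≤ Real.exp (Real.log η) := by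
            apply Real.exp_le_exp.mpr
            rcases abs_cases (1 - Real.log η) with ⟨ha, _⟩ | ⟨ha, _⟩ <;> rw [ha] <;> linarith
      _ = η := Real.exp_log hη
    linarith
  have hf0t := hf0 t₀ ht₀
  by_contra hne
  have hpos : 0 < f t₀ := lt_of_le_of_ne hf0t (Ne.symm hne)
  linarith [key (f t₀ / 2) (by positivity)]
end
end
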